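/- Under the convexity and qualification assumptions, problems (D) and (D̃) have the same value. Moreover, for any solution (u,γ,P) of (D), the pair (γ,P) is a solution of (D̃); problem (D̃) admits at least one solution; and conversely, for any solution (γ,P) of (D̃), the triple (U[γ,P],γ,P) is a solution of (D). -/

import Mathlib

noncomputable section
open Finset Filter Topology Bornology
open scoped Classical Pointwise

/-- Fenchel conjugate of a function on a finite coordinate space. -/
def conjFn {d : Type*} [Fintype d] (g : (d → ℝ) → EReal) (y : d → ℝ) : EReal :=
  ⨆ x : d → ℝ, (↑(∑ i, x i * y i) : EReal) - g x

/-- Fenchel conjugate, scalar case. -/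
def conjR (g : ℝ → EReal) (y : ℝ) : EReal :=
  ⨆ x : ℝ, (↑(x * y) : EReal) - g x

/-- Subdifferential (empty where `g = ⊤`). -/
def subdiffFn {d : Type*} [Fintype d] (g : (d → ℝ) → EReal) (x : d → ℝ) : Set (d → ℝ) :=
  {p | g x ≠ ⊤ ∧ ∀ x', g x + (↑(∑ i, p i * (x' i - x i)) : EReal) ≤ g x'}

def subdiffR (g : ℝ → EReal) (x : ℝ) : Set ℝ :=
  {p | g x ≠ ⊤ ∧ ∀ x', g x + (↑(p * (x' - x)) : EReal) ≤ g x'}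

def EProper {E : Type*} (g : E → EReal) : Prop := (∃ x, g x ≠ ⊤) ∧ ∀ x, g x ≠ ⊥

def EConvexOn {E : Type*} [AddCommMonoid E] [SMul ℝ E] (g : E → EReal) : Prop :=
  ∀ x y : E, ∀ a b : ℝ, 0 ≤ a → 0 ≤ b → a + b = 1 →
    g (a • x + b • y) ≤ (a : EReal) * g x + (b : EReal) * g y

def EStrictConvexOn {E : Type*} [AddCommMonoid E] [SMul ℝ E] (g : E → EReal) : Prop :=
  ∀ x y : E, x ≠ y → g x ≠ ⊤ → g y ≠ ⊤ → ∀ a b : ℝ, 0 < a → 0 < b → a + b = 1 →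
    g (a • x + b • y) < (a : EReal) * g x + (b : EReal) * g y

/-- Perspective function. -/
def persp {d : Type*} [Fintype d] (h : (d → ℝ) → EReal) (θ : ℝ) (x : d → ℝ) : EReal :=
  if 0 < θ then (θ : EReal) * h (θ⁻¹ • x)
  else if θ = 0 ∧ x = 0 then 0 else ⊤

/-- The simplex `Δ(S)`. -/
def simplex (n : ℕ) : Set (Fin n → ℝ) :=
  {ρ | (∀ y, ρ y ∈ Set.Icc (0 : ℝ) 1) ∧ ∑ y, ρ y = 1}

abbrev Msp (T n : ℕ) := Fin (T + 1) → Fin n → ℝ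
abbrev Wsp (T n : ℕ) := Fin T → Fin n → Fin n → ℝ
abbrev Psp (T : ℕ) := Fin T → ℝ
abbrev Csp (T n : ℕ) := Msp T n × Wsp T n × Msp T n × Psp T
abbrev Ksp (T n : ℕ) := Msp T n × Msp T n × Psp T
abbrev LSp (T n : ℕ) := Fin T → Fin n → (Fin n → ℝ) → EReal
abbrev FSp (T n : ℕ) := Fin (T + 1) → (Fin n → ℝ) → EReal
abbrev PhiSp (T : ℕ) := Fin T → ℝ → EReal
abbrev ASp (T n : ℕ) := Fin T → Fin n → Fin n → ℝ

variable {T n : ℕ}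

def opA (α : ASp T n) (w : Wsp T n) (t : Fin T) : ℝ := ∑ x, ∑ y, w t x y * α t x y

def opS (w : Wsp T n) (s : Fin (T + 1)) (x : Fin n) : ℝ :=
  if h : (s : ℕ) = 0 then 0
  else ∑ y, w ⟨(s : ℕ) - 1, by have := s.isLt; omega⟩ y x

def mbar0 (m0 : Fin n → ℝ) (s : Fin (T + 1)) (x : Fin n) : ℝ := if s = 0 then m0 x else 0

def Qcpl (α : ASp T n) (m : Msp T n) (π : Wsp T n) (t : Fin T) : ℝ :=
  ∑ x, ∑ y, m t.castSucc x * π t x y * α t x y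

def IsKol (m0 : Fin n → ℝ) (π : Wsp T n) (m : Msp T n) : Prop :=
  (∀ x, m 0 x = m0 x) ∧
    ∀ (t : Fin T) (x : Fin n), m t.succ x = ∑ y, m t.castSucc y * π t y x

def InDelta (π : Wsp T n) : Prop := ∀ t x, π t x ∈ simplex n

def ConvAssumption (ℓ : LSp T n) (F : FSp T n) (φ : PhiSp T) : Prop :=
  (∀ t x, EProper (ℓ t x) ∧ EConvexOn (ℓ t x) ∧ LowerSemicontinuous (ℓ t x) ∧
    ∀ ρ, ℓ t x ρ ≠ ⊤ → ρ ∈ simplex n) ∧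
  (∀ s, EProper (F s) ∧ EConvexOn (F s) ∧ LowerSemicontinuous (F s)) ∧
  (∀ t, EProper (φ t) ∧ EConvexOn (φ t) ∧ LowerSemicontinuous (φ t))

def Jpot (ℓ : LSp T n) (F : FSp T n) (φ : PhiSp T) (α : ASp T n)
    (m : Msp T n) (π : Wsp T n) : EReal :=
  (∑ t, ∑ x, (↑(m t.castSucc x) : EReal) * ℓ t x (π t x)) +
    (∑ t, φ t (Qcpl α m π t)) + ∑ s, F s (m s)

def Jtil (ℓ : LSp T n) (F : FSp T n) (φ : PhiSp T) (α : ASp T n)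
    (m : Msp T n) (w : Wsp T n) : EReal :=
  (∑ t, ∑ x, persp (ℓ t x) (m t.castSucc x) (w t x)) +
    (∑ t, φ t (opA α w t)) + ∑ s, F s (m s)

def FeasP (m0 : Fin n → ℝ) (p : Msp T n × Wsp T n) : Prop := InDelta p.2 ∧ IsKol m0 p.2 p.1

def FeasPt (m0 : Fin n → ℝ) (p : Msp T n × Wsp T n) : Prop :=
  ∀ s x, opS p.2 s x - p.1 s x + mbar0 m0 s x = 0

def valP (ℓ : LSp T n) (F : FSp T n) (φ : PhiSp T) (α : ASp T n) (m0 : Fin n → ℝ) : EReal :=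
  ⨅ p ∈ {p : Msp T n × Wsp T n | FeasP m0 p}, Jpot ℓ F φ α p.1 p.2

def valPt (ℓ : LSp T n) (F : FSp T n) (φ : PhiSp T) (α : ASp T n) (m0 : Fin n → ℝ) : EReal :=
  ⨅ p ∈ {p : Msp T n × Wsp T n | FeasPt m0 p}, Jtil ℓ F φ α p.1 p.2

def IsSolP (ℓ : LSp T n) (F : FSp T n) (φ : PhiSp T) (α : ASp T n) (m0 : Fin n → ℝ)
    (p : Msp T n × Wsp T n) : Prop :=
  FeasP m0 p ∧ ∀ q, FeasP m0 q → Jpot ℓ F φ α p.1 p.2 ≤ Jpot ℓ F φ α q.1 q.2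

def IsSolPt (ℓ : LSp T n) (F : FSp T n) (φ : PhiSp T) (α : ASp T n) (m0 : Fin n → ℝ)
    (p : Msp T n × Wsp T n) : Prop :=
  FeasPt m0 p ∧ ∀ q, FeasPt m0 q → Jtil ℓ F φ α p.1 p.2 ≤ Jtil ℓ F φ α q.1 q.2

def dpCost (ℓ : LSp T n) (α : ASp T n) (u : Msp T n) (P : Psp T)
    (t : Fin T) (x : Fin n) : EReal :=
  conjFn (ℓ t x) (fun y => -(α t x y * P t + u t.succ y))

def FeasD (ℓ : LSp T n) (α : ASp T n) (k : Ksp T n) : Prop :=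
  (∀ t x, (↑(k.1 t.castSucc x) : EReal) + dpCost ℓ α k.1 k.2.2 t x ≤ ↑(k.2.1 t.castSucc x)) ∧
  ∀ x, k.1 (Fin.last T) x = k.2.1 (Fin.last T) x

def Dobj (F : FSp T n) (φ : PhiSp T) (m0 : Fin n → ℝ) (k : Ksp T n) : EReal :=
  (↑(∑ x, m0 x * k.1 0 x) : EReal) - (∑ t, conjR (φ t) (k.2.2 t)) -
    ∑ s, conjFn (F s) (k.2.1 s)

def valD (ℓ : LSp T n) (F : FSp T n) (φ : PhiSp T) (α : ASp T n) (m0 : Fin n → ℝ) : EReal :=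
  ⨆ k ∈ {k : Ksp T n | FeasD ℓ α k}, Dobj F φ m0 k

def IsSolD (ℓ : LSp T n) (F : FSp T n) (φ : PhiSp T) (α : ASp T n) (m0 : Fin n → ℝ)
    (k : Ksp T n) : Prop :=
  FeasD ℓ α k ∧ ∀ k', FeasD ℓ α k' → Dobj F φ m0 k' ≤ Dobj F φ m0 k

/-- `IsDP ℓ α γ P u` : `u = U[γ,P]`, i.e. `u` solves the dynamic programming equation. -/
def IsDP (ℓ : LSp T n) (α : ASp T n) (γ : Msp T n) (P : Psp T) (u : Msp T n) : Prop :=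
  (∀ (t : Fin T) (x : Fin n),
    (↑(u t.castSucc x) : EReal) + dpCost ℓ α u P t x = ↑(γ t.castSucc x)) ∧
  ∀ x, u (Fin.last T) x = γ (Fin.last T) x

def valDt (ℓ : LSp T n) (F : FSp T n) (φ : PhiSp T) (α : ASp T n) (m0 : Fin n → ℝ) : EReal :=
  ⨆ k ∈ {k : Ksp T n | IsDP ℓ α k.2.1 k.2.2 k.1}, Dobj F φ m0 k

def IsSolDt (ℓ : LSp T n) (F : FSp T n) (φ : PhiSp T) (α : ASp T n) (m0 : Fin n → ℝ)
    (γ : Msp T n) (P : Psp T) (u : Msp T n) : Prop :=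
  IsDP ℓ α γ P u ∧
    ∀ γ' P' u', IsDP ℓ α γ' P' u' → Dobj F φ m0 (u', γ', P') ≤ Dobj F φ m0 (u, γ, P)

def IsKolPert (m0 : Fin n → ℝ) (ε1 : Msp T n) (π : Wsp T n) (m1 : Msp T n) : Prop :=
  (∀ x, m1 0 x = mbar0 m0 (0 : Fin (T + 1)) x + ε1 0 x) ∧
  ∀ (t : Fin T) (x : Fin n), m1 t.succ x = (∑ y, m1 t.castSucc y * π t y x) - ε1 t.succ x

def qnorm (ε1 ε2 : Msp T n) (ε3 : Psp T) : ℝ :=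
  Real.sqrt ((∑ s, ∑ x, ε1 s x ^ 2) + (∑ s, ∑ x, ε2 s x ^ 2) + ∑ t, ε3 t ^ 2)

def Qualif (ℓ : LSp T n) (F : FSp T n) (φ : PhiSp T) (α : ASp T n) (m0 : Fin n → ℝ) : Prop :=
  ∃ α0 : ℝ, 0 < α0 ∧ ∀ (ε1 ε2 : Msp T n) (ε3 : Psp T), qnorm ε1 ε2 ε3 ≤ α0 →
    ∃ π : Wsp T n, (∀ t x, ℓ t x (π t x) ≠ ⊤) ∧
      ∃ m1 : Msp T n, IsKolPert m0 ε1 π m1 ∧ (∀ s x, 0 ≤ m1 s x) ∧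
        (∀ s, F s (fun x => m1 s x + ε2 s x) ≠ ⊤) ∧
        ∀ t, φ t (Qcpl α m1 π t + ε3 t) ≠ ⊤

def Fobj (ℓ : LSp T n) (F : FSp T n) (φ : PhiSp T) (c : Csp T n) : EReal :=
  (∑ t, ∑ x, persp (ℓ t x) (c.1 t.castSucc x) (c.2.1 t x)) +
    (∑ t, φ t (c.2.2.2 t)) + ∑ s, F s (c.2.2.1 s)

def Gobj (m0 : Fin n → ℝ) (k : Ksp T n) : EReal :=
  if (∀ s x, k.1 s x = -(mbar0 m0 s x)) ∧ k.2.1 = 0 ∧ k.2.2 = 0 then 0 else ⊤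

def Aop (α : ASp T n) (c : Csp T n) : Ksp T n :=
  (fun s x => opS c.2.1 s x - c.1 s x,
   fun s x => c.1 s x - c.2.2.1 s x,
   fun t => opA α c.2.1 t - c.2.2.2 t)

def AstarOp (α : ASp T n) (k : Ksp T n) : Csp T n :=
  (fun s x => k.2.1 s x - k.1 s x,
   fun t x y => α t x y * k.2.2 t + k.1 t.succ y,
   fun s x => -k.2.1 s x,
   fun t => -k.2.2 t)

def cpair (c c' : Csp T n) : ℝ :=
  (∑ s, ∑ x, c.1 s x * c'.1 s x) + (∑ t, ∑ x, ∑ y, c.2.1 t x y * c'.2.1 t x y) +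
    (∑ s, ∑ x, c.2.2.1 s x * c'.2.2.1 s x) + ∑ t, c.2.2.2 t * c'.2.2.2 t

def kpair (k k' : Ksp T n) : ℝ :=
  (∑ s, ∑ x, k.1 s x * k'.1 s x) + (∑ s, ∑ x, k.2.1 s x * k'.2.1 s x) +
    ∑ t, k.2.2 t * k'.2.2 t

def FobjStar (ℓ : LSp T n) (F : FSp T n) (φ : PhiSp T) (c' : Csp T n) : EReal :=
  ⨆ c : Csp T n, (↑(cpair c c') : EReal) - Fobj ℓ F φ c

def GobjStar (m0 : Fin n → ℝ) (k : Ksp T n) : EReal := ↑(-(∑ x, m0 x * k.1 0 x))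

def PfrakObj (ℓ : LSp T n) (F : FSp T n) (φ : PhiSp T) (α : ASp T n) (m0 : Fin n → ℝ)
    (c : Csp T n) : EReal := Fobj ℓ F φ c + Gobj m0 (Aop α c)

def DfrakObj (ℓ : LSp T n) (F : FSp T n) (φ : PhiSp T) (α : ASp T n) (m0 : Fin n → ℝ)
    (k : Ksp T n) : EReal := FobjStar ℓ F φ (-AstarOp α k) + GobjStar m0 k

def IsSolPfrak (ℓ : LSp T n) (F : FSp T n) (φ : PhiSp T) (α : ASp T n) (m0 : Fin n → ℝ)
    (c : Csp T n) : Prop := ∀ c', PfrakObj ℓ F φ α m0 c ≤ PfrakObj ℓ F φ α m0 c'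

def IsSolDfrak (ℓ : LSp T n) (F : FSp T n) (φ : PhiSp T) (α : ASp T n) (m0 : Fin n → ℝ)
    (k : Ksp T n) : Prop := ∀ k', DfrakObj ℓ F φ α m0 k ≤ DfrakObj ℓ F φ α m0 k'

def MFGi (ℓ : LSp T n) (α : ASp T n) (γ : Msp T n) (P : Psp T) (u : Msp T n) : Prop :=
  (∀ (t : Fin T) (x : Fin n), (↑(u t.castSucc x) : EReal) =
      ⨅ ρ ∈ simplex n,
        ℓ t x ρ + ↑(γ t.castSucc x) + ↑(∑ y, ρ y * (α t x y * P t + u t.succ y))) ∧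
  ∀ x, u (Fin.last T) x = γ (Fin.last T) x

def MFGii (ℓ : LSp T n) (α : ASp T n) (π : Wsp T n) (γ : Msp T n) (P : Psp T)
    (u : Msp T n) : Prop :=
  ∀ (t : Fin T) (x : Fin n),
    ℓ t x (π t x) + ↑(γ t.castSucc x) + ↑(∑ y, π t x y * (α t x y * P t + u t.succ y)) =
      (↑(u t.castSucc x) : EReal)

def IsMFGSol (ℓ : LSp T n) (F : FSp T n) (φ : PhiSp T) (α : ASp T n) (m0 : Fin n → ℝ)
    (m : Msp T n) (π : Wsp T n) (u : Msp T n) (γ : Msp T n) (P : Psp T) : Prop :=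
  InDelta π ∧ MFGi ℓ α γ P u ∧ MFGii ℓ α π γ P u ∧ IsKol m0 π m ∧
    (∀ s, γ s ∈ subdiffFn (F s) (m s)) ∧ ∀ t, P t ∈ subdiffR (φ t) (Qcpl α m π t)
-- ===== EReal helpers =====

lemma er_sum_ne_bot {ι : Type*} (s : Finset ι) (f : ι → EReal)
    (h : ∀ i ∈ s, f i ≠ ⊥) : ∑ i ∈ s, f i ≠ ⊥ := by
  classical
  induction s using Finset.cons_induction with
  | empty => simp
  | cons a s ha ih =>
      rw [Finset.sum_cons]
      intro hbot
      rcases EReal.add_eq_bot_iff.1 hbot with h1 | h1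
      · exact h a (Finset.mem_cons_self a s) h1
      · exact ih (fun i hi => h i (Finset.mem_cons_of_mem hi)) h1

lemma er_sum_ne_top_elem {ι : Type*} (s : Finset ι) (f : ι → EReal)
    (hb : ∀ i ∈ s, f i ≠ ⊥) (h : ∑ i ∈ s, f i ≠ ⊤) : ∀ i ∈ s, f i ≠ ⊤ := by
  classical
  intro i hi hitop
  apply h
  rw [← Finset.add_sum_erase s f hi, hitop]
  exact EReal.top_add_of_ne_bot (er_sum_ne_bot _ _ fun j hj => hb j (Finset.mem_of_mem_erase hj))

lemma er_coe_sum {ι : Type*} (s : Finset ι) (f : ι → ℝ) :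
    ((∑ i ∈ s, f i : ℝ) : EReal) = ∑ i ∈ s, (f i : EReal) := by
  classical
  induction s using Finset.cons_induction with
  | empty => simp
  | cons a s ha ih => rw [Finset.sum_cons, Finset.sum_cons, EReal.coe_add, ih]

lemma er_coe_mul_le {a t : ℝ} {x : EReal} (ha : 0 ≤ a) (h : x ≤ (t : EReal)) :
    (a : EReal) * x ≤ ((a * t : ℝ) : EReal) := by
  rcases eq_or_lt_of_le ha with rfl | hpos
  · simp
  · induction x with
    | bot => rw [EReal.coe_mul_bot_of_pos (by exact_mod_cast hpos)]; exact bot_le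
    | coe y =>
        rw [← EReal.coe_mul, EReal.coe_le_coe_iff]
        exact mul_le_mul_of_nonneg_left (by exact_mod_cast h) ha
    | top => exact absurd h (by simp)

lemma er_real_sub_le_of_le_add {a b : ℝ} {c : EReal} (hc : c ≠ ⊥) (hctop : c ≠ ⊤)
    (h : (a : EReal) + c ≤ (b : EReal)) : a ≤ b - c.toReal := by
  lift c to ℝ using ⟨hctop, hc⟩
  rw [← EReal.coe_add, EReal.coe_le_coe_iff] at h
  simp only [EReal.toReal_coe]
  linarith

lemma fin_telescope {T : ℕ} (g : Fin (T + 1) → ℝ) :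
    ∑ t : Fin T, (g t.castSucc - g t.succ) = g 0 - g (Fin.last T) := by
  classical
  have key : ∀ t : Fin T, g t.castSucc - g t.succ =
      (fun i : ℕ => g ⟨min i T, by omega⟩) t - (fun i : ℕ => g ⟨min i T, by omega⟩) (t + 1) := by
    intro t
    have h1 : min (t : ℕ) T = (t : ℕ) := min_eq_left (le_of_lt t.isLt)
    have h2 : min ((t : ℕ) + 1) T = (t : ℕ) + 1 := min_eq_left t.isLt
    congr 1 <;> [skip; skip] <;> congr 1 <;> apply Fin.ext <;> simp [h1, h2, Fin.castSucc, Fin.succ]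
  rw [Finset.sum_congr rfl (fun t _ => key t),
    Fin.sum_univ_eq_sum_range
      (fun i : ℕ => (fun j : ℕ => g ⟨min j T, by omega⟩) i - (fun j : ℕ => g ⟨min j T, by omega⟩) (i + 1)) T,
    Finset.sum_range_sub' (fun j : ℕ => g ⟨min j T, by omega⟩)]
  congr 1 <;> congr 1 <;> apply Fin.ext <;> simp [Fin.last]


-- ===== simplex and conjugates =====

lemma simplex_isClosed (n : ℕ) : IsClosed (simplex n) := by
  have : simplex n =
      (⋂ y, (fun ρ : Fin n → ℝ => ρ y) ⁻¹' Set.Icc 0 1) ∩ {ρ | ∑ y, ρ y = 1} := by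
    ext ρ; simp [simplex, Set.mem_iInter]
  rw [this]
  exact (isClosed_iInter fun y => isClosed_Icc.preimage (continuous_apply y)).inter
    (isClosed_eq (by continuity) continuous_const)

lemma simplex_isCompact (n : ℕ) : IsCompact (simplex n) := by
  apply IsCompact.of_isClosed_subset (isCompact_univ_pi (fun _ : Fin n => isCompact_Icc))
    (simplex_isClosed n)
  intro ρ hρ
  exact Set.mem_univ_pi.2 fun y => hρ.1 y

lemma lsc_lb {n : ℕ} (g : (Fin n → ℝ) → EReal) (hl : LowerSemicontinuous g)
    (hb : ∀ x, g x ≠ ⊥) : ∃ c : ℝ, ∀ ρ ∈ simplex n, (c : EReal) ≤ g ρ := by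
  by_contra hcon
  push_neg at hcon
  set t : ℕ → Set (Fin n → ℝ) :=
    fun j => simplex n ∩ {x | g x ≤ ((-(j : ℝ) : ℝ) : EReal)} with ht
  have hclosed : ∀ j, IsClosed (t j) := fun j =>
    (simplex_isClosed n).inter (hl.isClosed_preimage _)
  have hne : ∀ j, (t j).Nonempty := by
    intro j
    obtain ⟨ρ, hρ, hlt⟩ := hcon (-(j : ℝ))
    exact ⟨ρ, hρ, le_of_lt hlt⟩
  have hsub : ∀ j, t (j + 1) ⊆ t j := by
    intro j x hx
    have h2 : g x ≤ ((-((j:ℝ) + 1) : ℝ) : EReal) := by exact_mod_cast hx.2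
    refine ⟨hx.1, ?_⟩
    show g x ≤ ((-(j : ℝ) : ℝ) : EReal)
    refine le_trans h2 ?_
    rw [EReal.coe_le_coe_iff]; linarith
  have hcpt : IsCompact (t 0) :=
    (simplex_isCompact n).of_isClosed_subset (hclosed 0) Set.inter_subset_left
  obtain ⟨x, hx⟩ := IsCompact.nonempty_iInter_of_sequence_nonempty_isCompact_isClosed
    t hsub hne hcpt hclosed
  have hxall : ∀ j : ℕ, g x ≤ ((-(j : ℝ) : ℝ) : EReal) := fun j => (Set.mem_iInter.1 hx j).2
  have : g x = ⊥ := by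
    by_contra hgx
    obtain ⟨y, hy1, hy2⟩ := EReal.exists_between_coe_real (Ne.bot_lt hgx)
    obtain ⟨j, hj⟩ := exists_nat_gt (-y)
    have h2 : ((y : ℝ) : EReal) < ((-(j:ℝ) : ℝ) : EReal) := lt_of_lt_of_le hy2 (hxall j)
    rw [EReal.coe_lt_coe_iff] at h2
    linarith
  exact hb x this

lemma conjFn_ge {d : Type*} [Fintype d] (g : (d → ℝ) → EReal) (y x : d → ℝ) :
    (↑(∑ i, x i * y i) : EReal) - g x ≤ conjFn g y :=
  le_iSup (fun x => (↑(∑ i, x i * y i) : EReal) - g x) x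

lemma conjR_ge (g : ℝ → EReal) (y x : ℝ) :
    (↑(x * y) : EReal) - g x ≤ conjR g y :=
  le_iSup (fun x => (↑(x * y) : EReal) - g x) x

lemma conjFn_ne_bot {d : Type*} [Fintype d] {g : (d → ℝ) → EReal}
    (hne : ∃ x, g x ≠ ⊤) (y : d → ℝ) : conjFn g y ≠ ⊥ := by
  obtain ⟨x, hx⟩ := hne
  intro hbot
  have h1 : (↑(∑ i, x i * y i) : EReal) - g x ≤ ⊥ := hbot ▸ conjFn_ge g y x
  have h2 : (↑(∑ i, x i * y i) : EReal) - g x ≠ ⊥ := by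
    by_cases hgb : g x = ⊥
    · rw [hgb, EReal.coe_sub_bot]; simp
    · lift g x to ℝ using ⟨hx, hgb⟩ with v
      rw [← EReal.coe_sub]; exact EReal.coe_ne_bot _
  exact h2 (le_bot_iff.1 h1)

lemma conjR_ne_bot {g : ℝ → EReal} (hne : ∃ x, g x ≠ ⊤) (y : ℝ) : conjR g y ≠ ⊥ := by
  obtain ⟨x, hx⟩ := hne
  intro hbot
  have h1 : (↑(x * y) : EReal) - g x ≤ ⊥ := hbot ▸ conjR_ge g y x
  have h2 : (↑(x * y) : EReal) - g x ≠ ⊥ := by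
    by_cases hgb : g x = ⊥
    · rw [hgb, EReal.coe_sub_bot]; simp
    · lift g x to ℝ using ⟨hx, hgb⟩ with v
      rw [← EReal.coe_sub]; exact EReal.coe_ne_bot _
  exact h2 (le_bot_iff.1 h1)

lemma simplex_pair_le {n : ℕ} {ρ y : Fin n → ℝ} (hρ : ρ ∈ simplex n) :
    ∑ i, ρ i * y i ≤ ∑ i, |y i| := by
  apply Finset.sum_le_sum
  intro i _
  calc ρ i * y i ≤ |ρ i * y i| := le_abs_self _
    _ = |ρ i| * |y i| := abs_mul _ _
    _ ≤ 1 * |y i| := by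
        apply mul_le_mul_of_nonneg_right _ (abs_nonneg _)
        rw [abs_of_nonneg (hρ.1 i).1]; exact (hρ.1 i).2
    _ = |y i| := one_mul _

lemma conjFn_le_real {n : ℕ} {g : (Fin n → ℝ) → EReal}
    (hdom : ∀ ρ, g ρ ≠ ⊤ → ρ ∈ simplex n) {c : ℝ}
    (hc : ∀ ρ ∈ simplex n, (c : EReal) ≤ g ρ) (y : Fin n → ℝ) :
    conjFn g y ≤ ((∑ i, |y i| - c : ℝ) : EReal) := by
  apply iSup_le
  intro x
  by_cases hgx : g x = ⊤
  · rw [hgx, EReal.sub_top]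
    exact bot_le
  · have hx := hdom x hgx
    calc (↑(∑ i, x i * y i) : EReal) - g x ≤ (↑(∑ i, |y i|) : EReal) - (c : EReal) :=
          EReal.sub_le_sub (EReal.coe_le_coe_iff.2 (simplex_pair_le hx)) (hc x hx)
      _ = ((∑ i, |y i| - c : ℝ) : EReal) := by rw [← EReal.coe_sub]

lemma conjFn_mono {n : ℕ} {g : (Fin n → ℝ) → EReal}
    (hdom : ∀ ρ, g ρ ≠ ⊤ → ρ ∈ simplex n) {a b : Fin n → ℝ}
    (h : ∀ y, a y ≤ b y) : conjFn g a ≤ conjFn g b := by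
  apply iSup_le
  intro x
  by_cases hgx : g x = ⊤
  · rw [hgx, EReal.sub_top]; exact bot_le
  · refine le_trans ?_ (conjFn_ge g b x)
    apply EReal.sub_le_sub _ le_rfl
    rw [EReal.coe_le_coe_iff]
    exact Finset.sum_le_sum fun i _ =>
      mul_le_mul_of_nonneg_left (h i) ((hdom x hgx).1 i).1

lemma conjFn_lip {n : ℕ} {g : (Fin n → ℝ) → EReal}
    (hdom : ∀ ρ, g ρ ≠ ⊤ → ρ ∈ simplex n) (hb : ∀ x, g x ≠ ⊥) (a b : Fin n → ℝ) :
    conjFn g a ≤ conjFn g b + ((∑ i, |a i - b i| : ℝ) : EReal) := by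
  apply iSup_le
  intro x
  by_cases hgx : g x = ⊤
  · rw [hgx, EReal.sub_top]; exact bot_le
  · have hx := hdom x hgx
    have key : ∑ i, x i * a i ≤ (∑ i, x i * b i) + ∑ i, |a i - b i| := by
      have h1 : ∑ i, x i * a i - ∑ i, x i * b i = ∑ i, x i * (a i - b i) := by
        rw [← Finset.sum_sub_distrib]; congr 1; ext i; ring
      have h2 : ∑ i, x i * (a i - b i) ≤ ∑ i, |a i - b i| :=
        simplex_pair_le hx
      linarith
    calc (↑(∑ i, x i * a i) : EReal) - g x
        ≤ (↑((∑ i, x i * b i) + ∑ i, |a i - b i|) : EReal) - g x :=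
          EReal.sub_le_sub (EReal.coe_le_coe_iff.2 key) le_rfl
      _ = ((↑(∑ i, x i * b i) : EReal) - g x) + ((∑ i, |a i - b i| : ℝ) : EReal) := by
          lift g x to ℝ using ⟨hgx, hb x⟩ with v
          rw [← EReal.coe_sub, ← EReal.coe_sub, ← EReal.coe_add]
          norm_cast
          ring
      _ ≤ conjFn g b + ((∑ i, |a i - b i| : ℝ) : EReal) := by
          apply add_le_add_left (conjFn_ge g b x)

lemma conjFn_real {n : ℕ} {g : (Fin n → ℝ) → EReal}
    (hp : EProper g) (hl : LowerSemicontinuous g)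
    (hdom : ∀ ρ, g ρ ≠ ⊤ → ρ ∈ simplex n) (y : Fin n → ℝ) :
    conjFn g y ≠ ⊤ ∧ conjFn g y ≠ ⊥ := by
  obtain ⟨c, hc⟩ := lsc_lb g hl hp.2
  constructor
  · intro htop
    have := conjFn_le_real hdom hc y
    rw [htop] at this
    exact EReal.coe_ne_top _ (top_le_iff.1 this)
  · exact conjFn_ne_bot hp.1 y

lemma conjFn_toReal_lip {n : ℕ} {g : (Fin n → ℝ) → EReal}
    (hp : EProper g) (hl : LowerSemicontinuous g)
    (hdom : ∀ ρ, g ρ ≠ ⊤ → ρ ∈ simplex n) (a b : Fin n → ℝ) :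
    (conjFn g a).toReal - (conjFn g b).toReal ≤ ∑ i, |a i - b i| := by
  have ha := conjFn_real hp hl hdom a
  have hb := conjFn_real hp hl hdom b
  have h := conjFn_lip hdom hp.2 a b
  rw [← EReal.coe_toReal ha.1 ha.2, ← EReal.coe_toReal hb.1 hb.2, ← EReal.coe_add,
    EReal.coe_le_coe_iff] at h
  linarith

lemma conjFn_toReal_continuous {n : ℕ} {g : (Fin n → ℝ) → EReal}
    (hp : EProper g) (hl : LowerSemicontinuous g)
    (hdom : ∀ ρ, g ρ ≠ ⊤ → ρ ∈ simplex n) :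
    Continuous fun y => (conjFn g y).toReal := by
  apply LipschitzWith.continuous (K := (n : NNReal))
  apply LipschitzWith.of_dist_le_mul
  intro a b
  rw [Real.dist_eq, abs_sub_le_iff]
  have hd : ∀ a b : Fin n → ℝ, ∑ i, |a i - b i| ≤ (n : ℝ) * dist a b := by
    intro a b
    calc ∑ i, |a i - b i| = ∑ i, dist (a i) (b i) := by
          simp [Real.dist_eq]
      _ ≤ ∑ _i : Fin n, dist a b := Finset.sum_le_sum fun i _ => dist_le_pi_dist a b i
      _ = (n : ℝ) * dist a b := by simp [mul_comm]
  constructor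
  · calc (conjFn g a).toReal - (conjFn g b).toReal ≤ ∑ i, |a i - b i| :=
          conjFn_toReal_lip hp hl hdom a b
      _ ≤ (n : ℝ) * dist a b := hd a b
  · calc (conjFn g b).toReal - (conjFn g a).toReal ≤ ∑ i, |b i - a i| :=
          conjFn_toReal_lip hp hl hdom b a
      _ = ∑ i, |a i - b i| := by congr 1; ext i; rw [abs_sub_comm]
      _ ≤ (n : ℝ) * dist a b := hd a b

-- ===== dynamic programming solution =====

lemma dpCost_real {T n : ℕ} {ℓ : LSp T n} {F : FSp T n} {φ : PhiSp T}
    (hconv : ConvAssumption ℓ F φ) (α : ASp T n) (u : Msp T n) (P : Psp T)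
    (t : Fin T) (x : Fin n) : dpCost ℓ α u P t x ≠ ⊤ ∧ dpCost ℓ α u P t x ≠ ⊥ := by
  obtain ⟨hp, _, hl, hdom⟩ := hconv.1 t x
  exact conjFn_real hp hl hdom _

def dpAux {T n : ℕ} (ℓ : LSp T n) (α : ASp T n) (γ : Msp T n) (P : Psp T) :
    ℕ → Fin n → ℝ
  | 0 => γ (Fin.last T)
  | (k+1) =>
      if h : k < T then
        fun x =>
          γ (⟨T - (k+1), by omega⟩ : Fin T).castSucc x -
            (conjFn (ℓ ⟨T - (k+1), by omega⟩ x)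
              (fun y => -(α ⟨T - (k+1), by omega⟩ x y * P ⟨T - (k+1), by omega⟩ +
                dpAux ℓ α γ P k y))).toReal
      else fun _ => 0

def dpSolve {T n : ℕ} (ℓ : LSp T n) (α : ASp T n) (γ : Msp T n) (P : Psp T) :
    Msp T n := fun s => dpAux ℓ α γ P (T - (s : ℕ))

lemma dpAux_succ {T n : ℕ} (ℓ : LSp T n) (α : ASp T n) (γ : Msp T n) (P : Psp T)
    {k : ℕ} (hkT : k < T) (t : Fin T) (ht : (t : ℕ) = T - (k+1)) (x : Fin n) :
    dpAux ℓ α γ P (k+1) x =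
      γ t.castSucc x -
        (conjFn (ℓ t x) (fun y => -(α t x y * P t + dpAux ℓ α γ P k y))).toReal := by
  have e : (⟨T - (k+1), by omega⟩ : Fin T) = t := Fin.ext (by simp [ht])
  simp only [dpAux, dif_pos hkT]
  rw [e]

lemma dpSolve_castSucc {T n : ℕ} (ℓ : LSp T n) (α : ASp T n) (γ : Msp T n) (P : Psp T)
    (t : Fin T) (x : Fin n) :
    dpSolve ℓ α γ P t.castSucc x =
      γ t.castSucc x - (dpCost ℓ α (dpSolve ℓ α γ P) P t x).toReal := by
  have htv : (t : ℕ) < T := t.isLt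
  have e1 : T - ((t.castSucc : Fin (T+1)) : ℕ) = (T - (t:ℕ) - 1) + 1 := by
    simp only [Fin.coe_castSucc]; omega
  have e2 : T - ((t.succ : Fin (T+1)) : ℕ) = T - (t:ℕ) - 1 := by
    simp only [Fin.val_succ]; omega
  have hsucc : dpSolve ℓ α γ P t.succ = dpAux ℓ α γ P (T - (t:ℕ) - 1) := by
    show dpAux ℓ α γ P (T - ((t.succ : Fin (T+1)) : ℕ)) = _
    rw [e2]
  have hcost : dpCost ℓ α (dpSolve ℓ α γ P) P t x =
      conjFn (ℓ t x) (fun y => -(α t x y * P t + dpAux ℓ α γ P (T - (t:ℕ) - 1) y)) := by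
    unfold dpCost
    rw [hsucc]
  show dpAux ℓ α γ P (T - ((t.castSucc : Fin (T+1)) : ℕ)) x = _
  rw [e1, dpAux_succ ℓ α γ P (by omega) t (by omega) x, hcost]

lemma dpSolve_last {T n : ℕ} (ℓ : LSp T n) (α : ASp T n) (γ : Msp T n) (P : Psp T) :
    dpSolve ℓ α γ P (Fin.last T) = γ (Fin.last T) := by
  show dpAux ℓ α γ P (T - ((Fin.last T : Fin (T+1)) : ℕ)) = _
  simp only [Fin.val_last, Nat.sub_self]
  rfl

lemma dpSolve_isDP {T n : ℕ} {ℓ : LSp T n} {F : FSp T n} {φ : PhiSp T}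
    (hconv : ConvAssumption ℓ F φ) (α : ASp T n) (γ : Msp T n) (P : Psp T) :
    IsDP ℓ α γ P (dpSolve ℓ α γ P) := by
  constructor
  · intro t x
    obtain ⟨hnt, hnb⟩ := dpCost_real hconv α (dpSolve ℓ α γ P) P t x
    rw [dpSolve_castSucc ℓ α γ P t x, ← EReal.coe_toReal hnt hnb, ← EReal.coe_add]
    norm_num
  · intro x
    rw [dpSolve_last]

lemma isDP_unique {T n : ℕ} {ℓ : LSp T n} {F : FSp T n} {φ : PhiSp T}
    (hconv : ConvAssumption ℓ F φ) {α : ASp T n} {γ : Msp T n} {P : Psp T}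
    {u : Msp T n} (hdp : IsDP ℓ α γ P u) : u = dpSolve ℓ α γ P := by
  have key : ∀ k : ℕ, k ≤ T → ∀ x, u ⟨T - k, by omega⟩ x = dpSolve ℓ α γ P ⟨T - k, by omega⟩ x := by
    intro k
    induction k with
    | zero =>
        intro _ x
        have hl : (⟨T - 0, by omega⟩ : Fin (T+1)) = Fin.last T := Fin.ext (by simp)
        rw [hl, dpSolve_last]
        exact hdp.2 x
    | succ k ih =>
        intro hk x
        have hkT : k < T := by omega
        set t : Fin T := ⟨T - (k+1), by omega⟩ with hts
        have hcs : (⟨T - (k+1), by omega⟩ : Fin (T+1)) = t.castSucc := Fin.ext (by simp [hts])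
        have hscc : (t.succ : Fin (T+1)) = ⟨T - k, by omega⟩ := Fin.ext (by simp [hts]; omega)
        have husucc : u t.succ = dpSolve ℓ α γ P t.succ := by
          funext y
          rw [hscc]
          exact ih (by omega) y
        have hcost : dpCost ℓ α u P t x = dpCost ℓ α (dpSolve ℓ α γ P) P t x := by
          unfold dpCost
          rw [husucc]
        have heq := hdp.1 t x
        rw [hcost] at heq
        obtain ⟨hnt, hnb⟩ := dpCost_real hconv α (dpSolve ℓ α γ P) P t x
        rw [← EReal.coe_toReal hnt hnb, ← EReal.coe_add, EReal.coe_eq_coe_iff] at heq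
        rw [hcs]
        rw [dpSolve_castSucc ℓ α γ P t x]
        linarith
  funext s x
  have hs : s = ⟨T - (T - (s:ℕ)), by omega⟩ := Fin.ext (by have := s.isLt; simp; omega)
  rw [hs]
  exact key (T - (s:ℕ)) (by omega) x

lemma feasD_le_dpSolve {T n : ℕ} {ℓ : LSp T n} {F : FSp T n} {φ : PhiSp T}
    (hconv : ConvAssumption ℓ F φ) {α : ASp T n} {γ : Msp T n} {P : Psp T}
    {u : Msp T n} (hfeas : FeasD ℓ α (u, γ, P)) :
    ∀ s x, u s x ≤ dpSolve ℓ α γ P s x := by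
  have key : ∀ k : ℕ, k ≤ T → ∀ x, u ⟨T - k, by omega⟩ x ≤ dpSolve ℓ α γ P ⟨T - k, by omega⟩ x := by
    intro k
    induction k with
    | zero =>
        intro _ x
        have hl : (⟨T - 0, by omega⟩ : Fin (T+1)) = Fin.last T := Fin.ext (by simp)
        rw [hl, dpSolve_last]
        exact le_of_eq (hfeas.2 x)
    | succ k ih =>
        intro hk x
        have hkT : k < T := by omega
        set t : Fin T := ⟨T - (k+1), by omega⟩ with hts
        have hcs : (⟨T - (k+1), by omega⟩ : Fin (T+1)) = t.castSucc := Fin.ext (by simp [hts])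
        have hscc : (t.succ : Fin (T+1)) = ⟨T - k, by omega⟩ := Fin.ext (by simp [hts]; omega)
        have husucc : ∀ y, u t.succ y ≤ dpSolve ℓ α γ P t.succ y := by
          intro y
          rw [hscc]
          exact ih (by omega) y
        obtain ⟨hp, _, hl, hdom⟩ := hconv.1 t x
        have hcost : dpCost ℓ α (dpSolve ℓ α γ P) P t x ≤ dpCost ℓ α u P t x := by
          unfold dpCost
          apply conjFn_mono hdom
          intro y
          have := husucc y
          simp only [neg_le_neg_iff]
          nlinarith [husucc y]
        have hle := hfeas.1 t x
        have h2 : (↑(u t.castSucc x) : EReal) + dpCost ℓ α (dpSolve ℓ α γ P) P t x ≤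
            ↑(γ t.castSucc x) := le_trans (add_le_add_right hcost _) hle
        obtain ⟨hnt, hnb⟩ := dpCost_real hconv α (dpSolve ℓ α γ P) P t x
        have := er_real_sub_le_of_le_add hnb hnt h2
        rw [hcs, dpSolve_castSucc ℓ α γ P t x]
        linarith
  intro s x
  have hs : s = ⟨T - (T - (s:ℕ)), by omega⟩ := Fin.ext (by have := s.isLt; simp; omega)
  rw [hs]
  exact key (T - (s:ℕ)) (by omega) x

-- ===== continuity of the DP solution =====

lemma dpAux_continuous {T n : ℕ} {ℓ : LSp T n} {F : FSp T n} {φ : PhiSp T}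
    (hconv : ConvAssumption ℓ F φ) (α : ASp T n) (k : ℕ) :
    Continuous fun p : Msp T n × Psp T => dpAux ℓ α p.1 p.2 k := by
  induction k with
  | zero =>
      show Continuous fun p : Msp T n × Psp T => p.1 (Fin.last T)
      exact (continuous_apply (Fin.last T)).comp continuous_fst
  | succ k ih =>
      by_cases h : k < T
      · have heq : (fun p : Msp T n × Psp T => dpAux ℓ α p.1 p.2 (k+1)) =
            fun p : Msp T n × Psp T => fun x =>
              p.1 (⟨T - (k+1), by omega⟩ : Fin T).castSucc x -
                (conjFn (ℓ ⟨T - (k+1), by omega⟩ x)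
                  (fun y => -(α ⟨T - (k+1), by omega⟩ x y * p.2 ⟨T - (k+1), by omega⟩ +
                    dpAux ℓ α p.1 p.2 k y))).toReal := by
          funext p
          simp only [dpAux, dif_pos h]
        rw [heq]
        apply continuous_pi
        intro x
        apply Continuous.sub
        · exact (continuous_apply x).comp ((continuous_apply _).comp continuous_fst)
        · obtain ⟨hp, _, hl, hdom⟩ := hconv.1 (⟨T - (k+1), by omega⟩ : Fin T) x
          apply (conjFn_toReal_continuous hp hl hdom).comp
          apply continuous_pi
          intro y
          apply Continuous.neg
          apply Continuous.add
          · exact continuous_const.mul ((continuous_apply _).comp continuous_snd)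
          · exact (continuous_apply y).comp ih
      · have heq : (fun p : Msp T n × Psp T => dpAux ℓ α p.1 p.2 (k+1)) =
            fun _ => fun _ => (0 : ℝ) := by
          funext p
          simp only [dpAux, dif_neg h]
        rw [heq]
        exact continuous_const

lemma dpSolve_zero_continuous {T n : ℕ} {ℓ : LSp T n} {F : FSp T n} {φ : PhiSp T}
    (hconv : ConvAssumption ℓ F φ) (α : ASp T n) :
    Continuous fun p : Msp T n × Psp T => dpSolve ℓ α p.1 p.2 0 := by
  show Continuous fun p : Msp T n × Psp T => dpAux ℓ α p.1 p.2 (T - ((0 : Fin (T+1)) : ℕ))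
  exact dpAux_continuous hconv α _

-- ===== Dobj lemmas =====

lemma er_sub_ne_top {a b : EReal} (ha : a ≠ ⊤) (hb : b ≠ ⊥) : a - b ≠ ⊤ := by
  have hbt : -b ≠ ⊤ := by
    intro hcon
    apply hb
    rw [← neg_neg b, hcon, EReal.neg_top]
  exact ne_of_lt (EReal.add_lt_top ha hbt)

lemma dobj_ne_top {T n : ℕ} {ℓ : LSp T n} {F : FSp T n} {φ : PhiSp T}
    (hconv : ConvAssumption ℓ F φ) (m0 : Fin n → ℝ) (k : Ksp T n) :
    Dobj F φ m0 k ≠ ⊤ := by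
  have hS1 : (∑ t, conjR (φ t) (k.2.2 t)) ≠ ⊥ :=
    er_sum_ne_bot _ _ fun t _ => conjR_ne_bot (hconv.2.2 t).1.1 _
  have hS2 : (∑ s, conjFn (F s) (k.2.1 s)) ≠ ⊥ :=
    er_sum_ne_bot _ _ fun s _ => conjFn_ne_bot (hconv.2.1 s).1.1 _
  exact er_sub_ne_top (er_sub_ne_top (EReal.coe_ne_top _) hS1) hS2

lemma dobj_mono {T n : ℕ} (F : FSp T n) (φ : PhiSp T) (m0 : Fin n → ℝ)
    (hm0 : ∀ x, 0 ≤ m0 x) {u u' γ : Msp T n} {P : Psp T}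
    (h : ∀ x, u 0 x ≤ u' 0 x) :
    Dobj F φ m0 (u, γ, P) ≤ Dobj F φ m0 (u', γ, P) := by
  unfold Dobj
  apply EReal.sub_le_sub _ le_rfl
  apply EReal.sub_le_sub _ le_rfl
  rw [EReal.coe_le_coe_iff]
  exact Finset.sum_le_sum fun x _ => mul_le_mul_of_nonneg_left (h x) (hm0 x)

lemma dp_dobj_le_valDt {T n : ℕ} {ℓ : LSp T n} {F : FSp T n} {φ : PhiSp T}
    {α : ASp T n} {m0 : Fin n → ℝ} {k : Ksp T n}
    (h : IsDP ℓ α k.2.1 k.2.2 k.1) : Dobj F φ m0 k ≤ valDt ℓ F φ α m0 :=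
  le_iSup₂ (f := fun k _ => Dobj F φ m0 k) k h

lemma feasD_dobj_le {T n : ℕ} {ℓ : LSp T n} {F : FSp T n} {φ : PhiSp T}
    (hconv : ConvAssumption ℓ F φ) {α : ASp T n} {m0 : Fin n → ℝ}
    (hm0 : m0 ∈ simplex n) {u γ : Msp T n} {P : Psp T}
    (h : FeasD ℓ α (u, γ, P)) :
    Dobj F φ m0 (u, γ, P) ≤ Dobj F φ m0 (dpSolve ℓ α γ P, γ, P) :=
  dobj_mono F φ m0 (fun x => (hm0.1 x).1) fun x => feasD_le_dpSolve hconv h 0 x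

lemma isDP_feasD {T n : ℕ} {ℓ : LSp T n} {α : ASp T n} {γ : Msp T n} {P : Psp T}
    {u : Msp T n} (h : IsDP ℓ α γ P u) : FeasD ℓ α (u, γ, P) :=
  ⟨fun t x => le_of_eq (h.1 t x), h.2⟩

lemma valD_eq_valDt {T n : ℕ} {ℓ : LSp T n} {F : FSp T n} {φ : PhiSp T}
    {α : ASp T n} {m0 : Fin n → ℝ} (hconv : ConvAssumption ℓ F φ)
    (hm0 : m0 ∈ simplex n) : valD ℓ F φ α m0 = valDt ℓ F φ α m0 := by
  apply le_antisymm
  · apply iSup₂_le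
    rintro ⟨u, γ, P⟩ hk
    calc Dobj F φ m0 (u, γ, P) ≤ Dobj F φ m0 (dpSolve ℓ α γ P, γ, P) :=
          feasD_dobj_le hconv hm0 hk
      _ ≤ valDt ℓ F φ α m0 := dp_dobj_le_valDt (dpSolve_isDP hconv α γ P)
  · apply iSup₂_le
    rintro ⟨u, γ, P⟩ hk
    exact le_iSup₂ (f := fun k _ => Dobj F φ m0 k) (u, γ, P) (isDP_feasD hk)

-- ===== affine minorants and nonemptiness of conjugate domains =====

lemma exists_affine_minorant {E : Type*} [NormedAddCommGroup E] [NormedSpace ℝ E]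
    (g : E → EReal) (hp : EProper g) (hc : EConvexOn g) (hl : LowerSemicontinuous g) :
    ∃ (f : E →L[ℝ] ℝ) (b : ℝ), ∀ x, ((f x + b : ℝ) : EReal) ≤ g x := by
  obtain ⟨x0, hx0⟩ := hp.1
  set r0 : ℝ := (g x0).toReal with hr0
  have hgx0 : g x0 = (r0 : EReal) := (EReal.coe_toReal hx0 (hp.2 x0)).symm
  set Epi : Set (E × ℝ) := {q | g q.1 ≤ (q.2 : EReal)} with hEpidef
  have hclosed : IsClosed Epi := by
    have h1 : IsClosed {q : E × EReal | g q.1 ≤ q.2} :=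
      lowerSemicontinuous_iff_isClosed_epigraph.1 hl
    have h2 : Epi = (fun q : E × ℝ => ((q.1, (q.2 : EReal)) : E × EReal)) ⁻¹'
        {q : E × EReal | g q.1 ≤ q.2} := rfl
    rw [h2]
    exact h1.preimage (continuous_fst.prodMk (continuous_coe_real_ereal.comp continuous_snd))
  have hconvex : Convex ℝ Epi := by
    rintro ⟨x, t⟩ hxt ⟨x', t'⟩ hxt' a b ha hb hab
    have h1 : g (a • x + b • x') ≤ (a : EReal) * g x + (b : EReal) * g x' :=
      hc x x' a b ha hb hab
    have h2 : (a : EReal) * g x ≤ ((a * t : ℝ) : EReal) := er_coe_mul_le ha hxt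
    have h3 : (b : EReal) * g x' ≤ ((b * t' : ℝ) : EReal) := er_coe_mul_le hb hxt'
    show g (a • x + b • x') ≤ (((a • (x, t) + b • (x', t')).2 : ℝ) : EReal)
    have h4 : (a • (x, t) + b • (x', t')).2 = a * t + b * t' := rfl
    rw [h4]
    calc g (a • x + b • x') ≤ (a : EReal) * g x + (b : EReal) * g x' := h1
      _ ≤ ((a * t : ℝ) : EReal) + ((b * t' : ℝ) : EReal) := add_le_add h2 h3
      _ = ((a * t + b * t' : ℝ) : EReal) := by rw [← EReal.coe_add]
  have hnotmem : ((x0, r0 - 1) : E × ℝ) ∉ Epi := by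
    intro hmem
    have : g x0 ≤ ((r0 - 1 : ℝ) : EReal) := hmem
    rw [hgx0, EReal.coe_le_coe_iff] at this
    linarith
  obtain ⟨f, u, hfu, hEpi⟩ := geometric_hahn_banach_point_closed hconvex hclosed hnotmem
  set A : E →L[ℝ] ℝ := f.comp (ContinuousLinearMap.inl ℝ E ℝ) with hA
  set c : ℝ := f (0, 1) with hcdef
  have hdecomp : ∀ (x : E) (t : ℝ), f (x, t) = A x + t * c := by
    intro x t
    have h1 : ((x, t) : E × ℝ) = (x, 0) + t • ((0 : E), (1 : ℝ)) := by
      ext <;> simp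
    rw [h1, map_add, map_smul]
    rfl
  have hmem0 : ((x0, r0) : E × ℝ) ∈ Epi := by
    show g x0 ≤ ((r0 : ℝ) : EReal)
    rw [hgx0]
  have hub := hEpi _ hmem0
  rw [hdecomp] at hub hfu
  have hcpos : 0 < c := by nlinarith
  refine ⟨(-(1/c)) • A, u / c, ?_⟩
  intro x
  by_cases hgx : g x = ⊤
  · rw [hgx]; exact le_top
  · have hmem : ((x, (g x).toReal) : E × ℝ) ∈ Epi := by
      show g x ≤ (((g x).toReal : ℝ) : EReal)
      rw [EReal.coe_toReal hgx (hp.2 x)]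
    have h2 := hEpi _ hmem
    rw [hdecomp] at h2
    have h3 : (((-(1/c)) • A) x + u / c : ℝ) ≤ (g x).toReal := by
      have h4 : ((-(1/c)) • A) x = -(1/c) * A x := rfl
      rw [h4]
      have h5 : -(1 / c) * A x + u / c = (u - A x) / c := by field_simp; ring
      rw [h5, div_le_iff₀ hcpos]
      linarith
    calc ((((-(1/c)) • A) x + u / c : ℝ) : EReal) ≤ (((g x).toReal : ℝ) : EReal) :=
          EReal.coe_le_coe_iff.2 h3
      _ = g x := EReal.coe_toReal hgx (hp.2 x)

lemma exists_conjFn_ne_top {d : ℕ} (g : (Fin d → ℝ) → EReal)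
    (hp : EProper g) (hc : EConvexOn g) (hl : LowerSemicontinuous g) :
    ∃ y, conjFn g y ≠ ⊤ := by
  obtain ⟨f, b, hmin⟩ := exists_affine_minorant g hp hc hl
  refine ⟨fun i => f (fun j => if i = j then 1 else 0), ?_⟩
  have hlin : ∀ x : Fin d → ℝ, ∑ i, x i * f (fun j => if i = j then 1 else 0) = f x := by
    intro x
    have := LinearMap.pi_apply_eq_sum_univ (f : (Fin d → ℝ) →ₗ[ℝ] ℝ) x
    simp only [ContinuousLinearMap.coe_coe] at this
    rw [this]
    rfl
  have hb : conjFn g (fun i => f (fun j => if i = j then 1 else 0)) ≤ ((-b : ℝ) : EReal) := by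
    apply iSup_le
    intro x
    rw [hlin x]
    calc ((f x : ℝ) : EReal) - g x ≤ ((f x : ℝ) : EReal) - ((f x + b : ℝ) : EReal) :=
          EReal.sub_le_sub le_rfl (hmin x)
      _ = ((-b : ℝ) : EReal) := by rw [← EReal.coe_sub]; norm_num
  intro htop
  rw [htop] at hb
  exact EReal.coe_ne_top _ (top_le_iff.1 hb)

lemma exists_conjR_ne_top (g : ℝ → EReal)
    (hp : EProper g) (hc : EConvexOn g) (hl : LowerSemicontinuous g) :
    ∃ y, conjR g y ≠ ⊤ := by
  obtain ⟨f, b, hmin⟩ := exists_affine_minorant g hp hc hl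
  refine ⟨f 1, ?_⟩
  have hlin : ∀ x : ℝ, x * f 1 = f x := by
    intro x
    have : f x = f (x • (1 : ℝ)) := by norm_num
    rw [this, map_smul, smul_eq_mul]
  have hb : conjR g (f 1) ≤ ((-b : ℝ) : EReal) := by
    apply iSup_le
    intro x
    rw [hlin x]
    calc ((f x : ℝ) : EReal) - g x ≤ ((f x : ℝ) : EReal) - ((f x + b : ℝ) : EReal) :=
          EReal.sub_le_sub le_rfl (hmin x)
      _ = ((-b : ℝ) : EReal) := by rw [← EReal.coe_sub]; norm_num
  intro htop
  rw [htop] at hb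
  exact EReal.coe_ne_top _ (top_le_iff.1 hb)

-- ===== weak duality =====

lemma weak_duality {T n : ℕ} {ℓ : LSp T n} {F : FSp T n} {φ : PhiSp T}
    {α : ASp T n} {m0 : Fin n → ℝ} (hconv : ConvAssumption ℓ F φ)
    {u γ : Msp T n} {P : Psp T} (hdp : IsDP ℓ α γ P u)
    (ε1 ε2 : Msp T n) (ε3 : Psp T) (π : Wsp T n) (m1 : Msp T n)
    (hπ : ∀ t x, ℓ t x (π t x) ≠ ⊤) (hkol : IsKolPert m0 ε1 π m1)
    (hpos : ∀ s x, 0 ≤ m1 s x)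
    (hF : ∀ s, F s (fun x => m1 s x + ε2 s x) ≠ ⊤)
    (hφ : ∀ t, φ t (Qcpl α m1 π t + ε3 t) ≠ ⊤) :
    Dobj F φ m0 (u, γ, P) ≤
      (((∑ t : Fin T, ∑ x, m1 t.castSucc x * (ℓ t x (π t x)).toReal) +
        (∑ s : Fin (T+1), (F s (fun x => m1 s x + ε2 s x)).toReal) +
        (∑ t : Fin T, (φ t (Qcpl α m1 π t + ε3 t)).toReal) +
        (∑ t : Fin T, ∑ y, ε1 t.succ y * u t.succ y) - (∑ x, ε1 0 x * u 0 x) -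
        (∑ s : Fin (T+1), ∑ x, ε2 s x * γ s x) - (∑ t : Fin T, ε3 t * P t) : ℝ) : EReal) := by
  have hDobj : Dobj F φ m0 (u, γ, P) =
      ((∑ x, m0 x * u 0 x : ℝ) : EReal) - (∑ t, conjR (φ t) (P t)) -
        ∑ s, conjFn (F s) (γ s) := rfl
  have hφbot : ∀ t : Fin T, conjR (φ t) (P t) ≠ ⊥ :=
    fun t => conjR_ne_bot (hconv.2.2 t).1.1 _
  have hFbot : ∀ s : Fin (T+1), conjFn (F s) (γ s) ≠ ⊥ :=
    fun s => conjFn_ne_bot (hconv.2.1 s).1.1 _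
  by_cases hφtop : ∀ t : Fin T, conjR (φ t) (P t) ≠ ⊤
  swap
  · push_neg at hφtop
    obtain ⟨t0, ht0⟩ := hφtop
    have hS1 : (∑ t, conjR (φ t) (P t)) = ⊤ := by
      rw [← Finset.add_sum_erase _ _ (Finset.mem_univ t0), ht0]
      exact EReal.top_add_of_ne_bot
        (er_sum_ne_bot _ _ fun j _ => hφbot j)
    rw [hDobj, hS1, EReal.sub_top, EReal.bot_sub]
    exact bot_le
  by_cases hFtop : ∀ s : Fin (T+1), conjFn (F s) (γ s) ≠ ⊤
  swap
  · push_neg at hFtop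
    obtain ⟨s0, hs0⟩ := hFtop
    have hS2 : (∑ s, conjFn (F s) (γ s)) = ⊤ := by
      rw [← Finset.add_sum_erase _ _ (Finset.mem_univ s0), hs0]
      exact EReal.top_add_of_ne_bot
        (er_sum_ne_bot _ _ fun j _ => hFbot j)
    rw [hDobj, hS2, EReal.sub_top]
    exact bot_le
  -- real setting
  set Lv : Fin T → Fin n → ℝ := fun t x => (ℓ t x (π t x)).toReal with hLv
  set Fv : Fin (T+1) → ℝ := fun s => (F s (fun x => m1 s x + ε2 s x)).toReal with hFv
  set φv : Fin T → ℝ := fun t => (φ t (Qcpl α m1 π t + ε3 t)).toReal with hφv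
  set Fs : Fin (T+1) → ℝ := fun s => (conjFn (F s) (γ s)).toReal with hFs
  set φs : Fin T → ℝ := fun t => (conjR (φ t) (P t)).toReal with hφs
  have hφcoe : ∀ t, conjR (φ t) (P t) = ((φs t : ℝ) : EReal) :=
    fun t => (EReal.coe_toReal (hφtop t) (hφbot t)).symm
  have hFcoe : ∀ s, conjFn (F s) (γ s) = ((Fs s : ℝ) : EReal) :=
    fun s => (EReal.coe_toReal (hFtop s) (hFbot s)).symm
  have hDr : Dobj F φ m0 (u, γ, P) =
      ((∑ x, m0 x * u 0 x - ∑ t, φs t - ∑ s, Fs s : ℝ) : EReal) := by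
    rw [hDobj, Finset.sum_congr rfl fun t _ => hφcoe t,
      Finset.sum_congr rfl fun s _ => hFcoe s, ← er_coe_sum, ← er_coe_sum,
      ← EReal.coe_sub, ← EReal.coe_sub]
  rw [hDr, EReal.coe_le_coe_iff]
  -- pointwise DP inequality
  have hax : ∀ (t : Fin T) (x : Fin n), u t.castSucc x ≤ γ t.castSucc x + Lv t x +
      ∑ y, π t x y * (α t x y * P t + u t.succ y) := by
    intro t x
    obtain ⟨hCt, hCb⟩ := dpCost_real hconv α u P t x
    set C : ℝ := (dpCost ℓ α u P t x).toReal with hC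
    have hCoe : dpCost ℓ α u P t x = ((C : ℝ) : EReal) :=
      (EReal.coe_toReal hCt hCb).symm
    have heq := hdp.1 t x
    rw [hCoe, ← EReal.coe_add, EReal.coe_eq_coe_iff] at heq
    have hLcoe : ℓ t x (π t x) = ((Lv t x : ℝ) : EReal) :=
      (EReal.coe_toReal (hπ t x) ((hconv.1 t x).1.2 _)).symm
    have hFY : (↑(∑ y, π t x y * (-(α t x y * P t + u t.succ y))) : EReal) -
        ℓ t x (π t x) ≤ dpCost ℓ α u P t x :=
      conjFn_ge (ℓ t x) _ (π t x)
    rw [hLcoe, hCoe, ← EReal.coe_sub, EReal.coe_le_coe_iff] at hFY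
    have hsn : ∑ y, π t x y * (-(α t x y * P t + u t.succ y)) =
        -(∑ y, π t x y * (α t x y * P t + u t.succ y)) := by
      rw [← Finset.sum_neg_distrib]
      apply Finset.sum_congr rfl
      intro y _
      ring
    rw [hsn] at hFY
    linarith
  -- Fenchel-Young for F
  have hFYF : ∀ s : Fin (T+1),
      ∑ x, (m1 s x + ε2 s x) * γ s x ≤ Fv s + Fs s := by
    intro s
    have h1 : (↑(∑ x, (m1 s x + ε2 s x) * γ s x) : EReal) -
        F s (fun x => m1 s x + ε2 s x) ≤ conjFn (F s) (γ s) :=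
      conjFn_ge (F s) (γ s) _
    have hFvcoe : F s (fun x => m1 s x + ε2 s x) = ((Fv s : ℝ) : EReal) :=
      (EReal.coe_toReal (hF s) ((hconv.2.1 s).1.2 _)).symm
    rw [hFvcoe, hFcoe s, ← EReal.coe_sub, EReal.coe_le_coe_iff] at h1
    linarith
  -- Fenchel-Young for φ
  have hFYφ : ∀ t : Fin T,
      (Qcpl α m1 π t + ε3 t) * P t ≤ φv t + φs t := by
    intro t
    have h1 : (↑((Qcpl α m1 π t + ε3 t) * P t) : EReal) -
        φ t (Qcpl α m1 π t + ε3 t) ≤ conjR (φ t) (P t) :=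
      conjR_ge (φ t) (P t) _
    have hφvcoe : φ t (Qcpl α m1 π t + ε3 t) = ((φv t : ℝ) : EReal) :=
      (EReal.coe_toReal (hφ t) ((hconv.2.2 t).1.2 _)).symm
    rw [hφvcoe, hφcoe t, ← EReal.coe_sub, EReal.coe_le_coe_iff] at h1
    linarith
  -- step inequality
  set f : Fin (T+1) → ℝ := fun s => ∑ x, m1 s x * u s x with hf
  have hstep : ∀ t : Fin T, f t.castSucc - f t.succ ≤
      (∑ x, m1 t.castSucc x * γ t.castSucc x) + (∑ x, m1 t.castSucc x * Lv t x) +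
      Qcpl α m1 π t * P t + ∑ y, ε1 t.succ y * u t.succ y := by
    intro t
    have h1 : f t.castSucc ≤ ∑ x, m1 t.castSucc x *
        (γ t.castSucc x + Lv t x + ∑ y, π t x y * (α t x y * P t + u t.succ y)) :=
      Finset.sum_le_sum fun x _ =>
        mul_le_mul_of_nonneg_left (hax t x) (hpos t.castSucc x)
    have h2 : ∑ x, m1 t.castSucc x *
        (γ t.castSucc x + Lv t x + ∑ y, π t x y * (α t x y * P t + u t.succ y)) =
        (∑ x, m1 t.castSucc x * γ t.castSucc x) + (∑ x, m1 t.castSucc x * Lv t x) +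
        ∑ x, ∑ y, m1 t.castSucc x * (π t x y * (α t x y * P t + u t.succ y)) := by
      rw [← Finset.sum_add_distrib, ← Finset.sum_add_distrib]
      apply Finset.sum_congr rfl
      intro x _
      rw [mul_add, mul_add, Finset.mul_sum]
    have h3 : ∑ x, ∑ y, m1 t.castSucc x * (π t x y * (α t x y * P t + u t.succ y)) =
        Qcpl α m1 π t * P t + ∑ y, (∑ x, m1 t.castSucc x * π t x y) * u t.succ y := by
      have e1 : ∀ x y, m1 t.castSucc x * (π t x y * (α t x y * P t + u t.succ y)) =
          m1 t.castSucc x * π t x y * α t x y * P t +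
            m1 t.castSucc x * π t x y * u t.succ y := by intro x y; ring
      rw [Finset.sum_congr rfl fun x _ => Finset.sum_congr rfl fun y _ => e1 x y]
      rw [Finset.sum_congr rfl fun x _ => Finset.sum_add_distrib, Finset.sum_add_distrib]
      congr 1
      · unfold Qcpl
        rw [Finset.sum_mul]
        apply Finset.sum_congr rfl
        intro x _
        rw [Finset.sum_mul]
      · rw [Finset.sum_comm]
        apply Finset.sum_congr rfl
        intro y _
        rw [Finset.sum_mul]
    have h4 : ∀ y, ∑ x, m1 t.castSucc x * π t x y = m1 t.succ y + ε1 t.succ y := by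
      intro y
      have := hkol.2 t y
      linarith
    have h5 : ∑ y, (∑ x, m1 t.castSucc x * π t x y) * u t.succ y =
        f t.succ + ∑ y, ε1 t.succ y * u t.succ y := by
      rw [Finset.sum_congr rfl fun y _ => by rw [h4 y, add_mul]]
      rw [Finset.sum_add_distrib]
    have := h1
    rw [h2, h3, h5] at this
    linarith
  -- telescoping
  have htel := fin_telescope f
  have hsumstep : f 0 - f (Fin.last T) ≤
      (∑ t, ((∑ x, m1 t.castSucc x * γ t.castSucc x) +
        (∑ x, m1 t.castSucc x * Lv t x) + Qcpl α m1 π t * P t +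
        ∑ y, ε1 t.succ y * u t.succ y)) := by
    rw [← htel]
    exact Finset.sum_le_sum fun t _ => hstep t
  -- terminal
  have hlast : f (Fin.last T) = ∑ x, m1 (Fin.last T) x * γ (Fin.last T) x := by
    apply Finset.sum_congr rfl
    intro x _
    rw [hdp.2 x]
  -- bound for ⟨m1 s, γ s⟩
  have hmγ : ∀ s : Fin (T+1), ∑ x, m1 s x * γ s x ≤
      Fv s + Fs s - ∑ x, ε2 s x * γ s x := by
    intro s
    have h1 := hFYF s
    have h2 : ∑ x, (m1 s x + ε2 s x) * γ s x =
        (∑ x, m1 s x * γ s x) + ∑ x, ε2 s x * γ s x := by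
      rw [← Finset.sum_add_distrib]
      apply Finset.sum_congr rfl
      intro x _
      ring
    rw [h2] at h1
    linarith
  -- bound for Q·P
  have hQP : ∀ t : Fin T, Qcpl α m1 π t * P t ≤ φv t + φs t - ε3 t * P t := by
    intro t
    have h1 := hFYφ t
    nlinarith [hFYφ t]
  -- initial condition
  have hinit : ∑ x, m0 x * u 0 x = f 0 - ∑ x, ε1 0 x * u 0 x := by
    rw [hf]
    simp only
    rw [← Finset.sum_sub_distrib]
    apply Finset.sum_congr rfl
    intro x _
    have h1 := hkol.1 x
    have h2 : mbar0 m0 (0 : Fin (T+1)) x = m0 x := by simp [mbar0]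
    rw [h2] at h1
    rw [h1]
    ring
  -- combine sums over all s
  have hcast : ∀ (G : Fin (T+1) → ℝ), ∑ s, G s = (∑ t : Fin T, G t.castSucc) + G (Fin.last T) :=
    fun G => Fin.sum_univ_castSucc G
  -- final assembly
  have hmain : f 0 ≤ (∑ s : Fin (T+1), (Fv s + Fs s - ∑ x, ε2 s x * γ s x)) +
      (∑ t : Fin T, ∑ x, m1 t.castSucc x * Lv t x) +
      (∑ t : Fin T, (φv t + φs t - ε3 t * P t)) +
      ∑ t : Fin T, ∑ y, ε1 t.succ y * u t.succ y := by
    have h6 : f 0 ≤ f (Fin.last T) +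
        ∑ t : Fin T, ((∑ x, m1 t.castSucc x * γ t.castSucc x) +
          (∑ x, m1 t.castSucc x * Lv t x) + Qcpl α m1 π t * P t +
          ∑ y, ε1 t.succ y * u t.succ y) := by linarith
    have h7 : ∑ t : Fin T, ((∑ x, m1 t.castSucc x * γ t.castSucc x) +
          (∑ x, m1 t.castSucc x * Lv t x) + Qcpl α m1 π t * P t +
          ∑ y, ε1 t.succ y * u t.succ y) ≤
        ∑ t : Fin T, ((Fv t.castSucc + Fs t.castSucc - ∑ x, ε2 t.castSucc x * γ t.castSucc x) +
          (∑ x, m1 t.castSucc x * Lv t x) + (φv t + φs t - ε3 t * P t) +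
          ∑ y, ε1 t.succ y * u t.succ y) := by
      apply Finset.sum_le_sum
      intro t _
      have := hmγ t.castSucc
      have := hQP t
      linarith
    have h8 : f (Fin.last T) ≤ Fv (Fin.last T) + Fs (Fin.last T) -
        ∑ x, ε2 (Fin.last T) x * γ (Fin.last T) x := by
      rw [hlast]
      exact hmγ (Fin.last T)
    have h9 : ∑ t : Fin T, ((Fv t.castSucc + Fs t.castSucc - ∑ x, ε2 t.castSucc x * γ t.castSucc x) +
          (∑ x, m1 t.castSucc x * Lv t x) + (φv t + φs t - ε3 t * P t) +
          ∑ y, ε1 t.succ y * u t.succ y) =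
        (∑ t : Fin T, (Fv t.castSucc + Fs t.castSucc - ∑ x, ε2 t.castSucc x * γ t.castSucc x)) +
        (∑ t : Fin T, ∑ x, m1 t.castSucc x * Lv t x) +
        (∑ t : Fin T, (φv t + φs t - ε3 t * P t)) +
        ∑ t : Fin T, ∑ y, ε1 t.succ y * u t.succ y := by
      rw [← Finset.sum_add_distrib, ← Finset.sum_add_distrib, ← Finset.sum_add_distrib]
    have h10 : ∑ s, (Fv s + Fs s - ∑ x, ε2 s x * γ s x) =
        (∑ t : Fin T, (Fv t.castSucc + Fs t.castSucc - ∑ x, ε2 t.castSucc x * γ t.castSucc x)) +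
        (Fv (Fin.last T) + Fs (Fin.last T) - ∑ x, ε2 (Fin.last T) x * γ (Fin.last T) x) :=
      hcast _
    linarith
  -- split the sums into components
  have hsplitF : ∑ s : Fin (T+1), (Fv s + Fs s - ∑ x, ε2 s x * γ s x) =
      (∑ s : Fin (T+1), Fv s) + (∑ s : Fin (T+1), Fs s) -
        ∑ s : Fin (T+1), ∑ x, ε2 s x * γ s x := by
    rw [← Finset.sum_add_distrib, ← Finset.sum_sub_distrib]
  have hsplitφ : ∑ t : Fin T, (φv t + φs t - ε3 t * P t) =
      (∑ t : Fin T, φv t) + (∑ t : Fin T, φs t) - ∑ t : Fin T, ε3 t * P t := by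
    rw [← Finset.sum_add_distrib, ← Finset.sum_sub_distrib]
  rw [hsplitF, hsplitφ] at hmain
  show ∑ x, m0 x * u 0 x - (∑ t : Fin T, φs t) - (∑ s : Fin (T+1), Fs s) ≤
      (∑ t : Fin T, ∑ x, m1 t.castSucc x * Lv t x) + (∑ s : Fin (T+1), Fv s) +
      (∑ t : Fin T, φv t) + (∑ t : Fin T, ∑ y, ε1 t.succ y * u t.succ y) -
      (∑ x, ε1 0 x * u 0 x) - (∑ s : Fin (T+1), ∑ x, ε2 s x * γ s x) -
      (∑ t : Fin T, ε3 t * P t)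
  linarith

-- ===== lower semicontinuity machinery =====

lemma lsc_iSup {X : Type*} [TopologicalSpace X] {ι : Type*} {f : ι → X → EReal}
    (h : ∀ i, LowerSemicontinuous (f i)) :
    LowerSemicontinuous fun x => ⨆ i, f i x := by
  intro x y hy
  simp only [gt_iff_lt] at hy
  rw [lt_iSup_iff] at hy
  obtain ⟨i, hi⟩ := hy
  filter_upwards [h i x y hi] with z hz
  exact lt_of_lt_of_le hz (le_iSup (fun i => f i z) i)

lemma conjFn_lsc {d : Type*} [Fintype d] (g : (d → ℝ) → EReal) :
    LowerSemicontinuous (conjFn g) := by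
  apply lsc_iSup
  intro x
  by_cases hg : g x = ⊤
  · have he : (fun y : d → ℝ => (↑(∑ i, x i * y i) : EReal) - g x) = fun _ => ⊥ := by
      funext y; rw [hg, EReal.sub_top]
    rw [he]; exact lowerSemicontinuous_const
  · by_cases hgb : g x = ⊥
    · have he : (fun y : d → ℝ => (↑(∑ i, x i * y i) : EReal) - g x) = fun _ => ⊤ := by
        funext y; rw [hgb, EReal.coe_sub_bot]
      rw [he]; exact lowerSemicontinuous_const
    · lift g x to ℝ using ⟨hg, hgb⟩ with v hv
      have he : (fun y : d → ℝ => (↑(∑ i, x i * y i) : EReal) - (v : EReal)) =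
          fun y => ((∑ i, x i * y i - v : ℝ) : EReal) := by
        funext y; rw [EReal.coe_sub]
      rw [he]
      apply Continuous.lowerSemicontinuous
      exact continuous_coe_real_ereal.comp
        ((continuous_finset_sum _ fun i _ => (continuous_const.mul (continuous_apply i))).sub
          continuous_const)

lemma conjR_lsc (g : ℝ → EReal) : LowerSemicontinuous (conjR g) := by
  apply lsc_iSup
  intro x
  by_cases hg : g x = ⊤
  · have he : (fun y : ℝ => (↑(x * y) : EReal) - g x) = fun _ => ⊥ := by
      funext y; rw [hg, EReal.sub_top]
    rw [he]; exact lowerSemicontinuous_const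
  · by_cases hgb : g x = ⊥
    · have he : (fun y : ℝ => (↑(x * y) : EReal) - g x) = fun _ => ⊤ := by
        funext y; rw [hgb, EReal.coe_sub_bot]
      rw [he]; exact lowerSemicontinuous_const
    · lift g x to ℝ using ⟨hg, hgb⟩ with v hv
      have he : (fun y : ℝ => (↑(x * y) : EReal) - (v : EReal)) =
          fun y => ((x * y - v : ℝ) : EReal) := by
        funext y; rw [EReal.coe_sub]
      rw [he]
      apply Continuous.lowerSemicontinuous
      exact continuous_coe_real_ereal.comp ((continuous_const.mul continuous_id).sub
        continuous_const)

lemma lsc_add_ne_bot {X : Type*} [TopologicalSpace X] {f g : X → EReal}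
    (hf : LowerSemicontinuous f) (hg : LowerSemicontinuous g)
    (hfb : ∀ x, f x ≠ ⊥) (hgb : ∀ x, g x ≠ ⊥) :
    LowerSemicontinuous fun x => f x + g x := by
  intro x y hy
  by_cases hybot : y = ⊥
  · subst hybot
    apply Filter.Eventually.of_forall
    intro z
    exact Ne.bot_lt fun hc => (EReal.add_eq_bot_iff.1 hc).elim (hfb z) (hgb z)
  · have hytop : y ≠ ⊤ := fun hc => not_top_lt (hc ▸ hy)
    lift y to ℝ using ⟨hytop, hybot⟩ with yr
    obtain ⟨a, b, haf, hbg, hab⟩ :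
        ∃ a b : ℝ, (a : EReal) < f x ∧ (b : EReal) < g x ∧ yr ≤ a + b := by
      by_cases hft : f x = ⊤
      · obtain ⟨b, hb1, hb2⟩ := EReal.exists_between_coe_real (Ne.bot_lt (hgb x))
        exact ⟨yr - b, b, by rw [hft]; exact EReal.coe_lt_top _, hb2, by linarith⟩
      · by_cases hgt : g x = ⊤
        · obtain ⟨a, ha1, ha2⟩ := EReal.exists_between_coe_real (Ne.bot_lt (hfb x))
          exact ⟨a, yr - a, ha2, by rw [hgt]; exact EReal.coe_lt_top _, by linarith⟩
        · lift f x to ℝ using ⟨hft, hfb x⟩ with p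
          lift g x to ℝ using ⟨hgt, hgb x⟩ with q
          rw [← EReal.coe_add, gt_iff_lt, EReal.coe_lt_coe_iff] at hy
          refine ⟨p - (p + q - yr)/2, q - (p + q - yr)/2, ?_, ?_, by linarith⟩
          · exact EReal.coe_lt_coe_iff.2 (by linarith)
          · exact EReal.coe_lt_coe_iff.2 (by linarith)
    filter_upwards [hf x a haf, hg x b hbg] with z hza hzb
    calc (yr : EReal) ≤ ((a + b : ℝ) : EReal) := EReal.coe_le_coe_iff.2 hab
      _ = (a : EReal) + (b : EReal) := EReal.coe_add a b
      _ < f z + g z := EReal.add_lt_add hza hzb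

lemma lsc_finset_sum {X : Type*} [TopologicalSpace X] {ι : Type*} (s : Finset ι)
    (f : ι → X → EReal) (h : ∀ i ∈ s, LowerSemicontinuous (f i))
    (hb : ∀ i ∈ s, ∀ x, f i x ≠ ⊥) :
    LowerSemicontinuous fun x => ∑ i ∈ s, f i x := by
  classical
  induction s using Finset.cons_induction with
  | empty => simpa using lowerSemicontinuous_const
  | cons a s ha ih =>
      have he : (fun x => ∑ i ∈ Finset.cons a s ha, f i x) =
          fun x => f a x + ∑ i ∈ s, f i x := by
        funext x; rw [Finset.sum_cons]
      rw [he]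
      exact lsc_add_ne_bot (h a (Finset.mem_cons_self a s))
        (ih (fun i hi => h i (Finset.mem_cons_of_mem hi))
          (fun i hi => hb i (Finset.mem_cons_of_mem hi)))
        (fun x => hb a (Finset.mem_cons_self a s) x)
        (fun x => er_sum_ne_bot _ _ fun i hi => hb i (Finset.mem_cons_of_mem hi) x)

lemma er_sub_sub (a : ℝ) {b c : EReal} (hb : b ≠ ⊥) (hc : c ≠ ⊥) :
    (a : EReal) - b - c = (a : EReal) - (b + c) := by
  by_cases hbt : b = ⊤
  · rw [hbt, EReal.sub_top, EReal.bot_sub, EReal.top_add_of_ne_bot hc, EReal.sub_top]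
  · lift b to ℝ using ⟨hbt, hb⟩ with bv
    by_cases hct : c = ⊤
    · rw [hct, EReal.sub_top, EReal.coe_add_top, EReal.sub_top]
    · lift c to ℝ using ⟨hct, hc⟩ with cv
      norm_cast
      ring

lemma superlevel_closed {X : Type*} [TopologicalSpace X] {h0 : X → ℝ}
    (hc : Continuous h0) {N : X → EReal} (hN : LowerSemicontinuous N)
    (hNb : ∀ p, N p ≠ ⊥) (c : ℝ) :
    IsClosed {p | (c : EReal) ≤ (h0 p : EReal) - N p} := by
  have hset : {p | (c : EReal) ≤ (h0 p : EReal) - N p} =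
      {p | ((h0 p - c : ℝ) : EReal) < N p}ᶜ := by
    ext p
    simp only [Set.mem_setOf_eq, Set.mem_compl_iff, not_lt]
    by_cases hNt : N p = ⊤
    · rw [hNt, EReal.sub_top]
      constructor
      · intro hcon; exact absurd (le_bot_iff.1 hcon) (EReal.coe_ne_bot c)
      · intro hcon; exact absurd (top_le_iff.1 hcon) (EReal.coe_ne_top _)
    · lift N p to ℝ using ⟨hNt, hNb p⟩ with ν
      rw [← EReal.coe_sub, EReal.coe_le_coe_iff, EReal.coe_le_coe_iff]
      constructor <;> intro <;> linarith
  rw [hset]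
  apply IsOpen.isClosed_compl
  rw [isOpen_iff_mem_nhds]
  intro p hp
  obtain ⟨y, hy1, hy2⟩ := EReal.exists_between_coe_real hp
  have hopen : IsOpen {z | h0 z - c < y} :=
    isOpen_lt (hc.sub continuous_const) continuous_const
  have hmem : p ∈ {z | h0 z - c < y} := by
    simp only [Set.mem_setOf_eq]
    exact_mod_cast hy1
  filter_upwards [hopen.mem_nhds hmem, hN p y hy2] with z hz1 hz2
  show ((h0 z - c : ℝ) : EReal) < N z
  exact lt_trans (EReal.coe_lt_coe_iff.2 hz1) hz2

-- sum collapse helpers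

lemma sum_single_mul {T n : ℕ} (s : Fin (T+1)) (x : Fin n) (δ : ℝ) (g : Msp T n) :
    ∑ s' : Fin (T+1), ∑ x' : Fin n,
      (if s' = s then if x' = x then δ else 0 else 0) * g s' x' = δ * g s x := by
  rw [Finset.sum_eq_single_of_mem s (Finset.mem_univ s)]
  · rw [Finset.sum_eq_single_of_mem x (Finset.mem_univ x)]
    · simp
    · intro x' _ hx'
      simp [hx']
  · intro s' _ hs'
    simp [hs']

lemma sum_single_sq {T n : ℕ} (s : Fin (T+1)) (x : Fin n) (δ : ℝ) :
    ∑ s' : Fin (T+1), ∑ x' : Fin n,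
      (if s' = s then if x' = x then δ else 0 else 0) ^ 2 = δ ^ 2 := by
  rw [Finset.sum_eq_single_of_mem s (Finset.mem_univ s)]
  · rw [Finset.sum_eq_single_of_mem x (Finset.mem_univ x)]
    · simp
    · intro x' _ hx'
      simp [hx']
  · intro s' _ hs'
    simp [hs']

lemma sum_single_mul_t {T : ℕ} (t0 : Fin T) (δ : ℝ) (g : Psp T) :
    ∑ t : Fin T, (if t = t0 then δ else 0) * g t = δ * g t0 := by
  rw [Finset.sum_eq_single_of_mem t0 (Finset.mem_univ t0)]
  · simp
  · intro t _ ht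
    simp [ht]

lemma sum_single_sq_t {T : ℕ} (t0 : Fin T) (δ : ℝ) :
    ∑ t : Fin T, (if t = t0 then δ else 0) ^ 2 = δ ^ 2 := by
  rw [Finset.sum_eq_single_of_mem t0 (Finset.mem_univ t0)]
  · simp
  · intro t _ ht
    simp [ht]

lemma qnorm_zero {T n : ℕ} : qnorm (T := T) (n := n) (fun _ _ => 0) (fun _ _ => 0)
    (fun _ => 0) = 0 := by
  unfold qnorm
  simp

lemma qnorm_eps2 {T n : ℕ} (s : Fin (T+1)) (x : Fin n) (δ : ℝ) :
    qnorm (T := T) (n := n) (fun _ _ => 0)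
      (fun s' x' => if s' = s then if x' = x then δ else 0 else 0) (fun _ => 0) = |δ| := by
  unfold qnorm
  rw [show (∑ s' : Fin (T+1), ∑ x' : Fin n, (0:ℝ)^2) = 0 by simp,
    show (∑ t : Fin T, (0:ℝ)^2) = 0 by simp, sum_single_sq s x δ]
  rw [zero_add, add_zero, Real.sqrt_sq_eq_abs]

lemma qnorm_eps3 {T n : ℕ} (t0 : Fin T) (δ : ℝ) :
    qnorm (T := T) (n := n) (fun _ _ => 0) (fun _ _ => 0)
      (fun t => if t = t0 then δ else 0) = |δ| := by
  unfold qnorm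
  rw [show (∑ s' : Fin (T+1), ∑ x' : Fin n, (0:ℝ)^2) = 0 by simp, sum_single_sq_t t0 δ]
  rw [zero_add, zero_add, Real.sqrt_sq_eq_abs]

-- ===== existence of a solution of the reduced dual problem =====

lemma exists_solDt {T n : ℕ} {ℓ : LSp T n} {F : FSp T n} {φ : PhiSp T}
    {α : ASp T n} {m0 : Fin n → ℝ} (hm0 : m0 ∈ simplex n)
    (hconv : ConvAssumption ℓ F φ) (hqual : Qualif ℓ F φ α m0) :
    ∃ (γ : Msp T n) (P : Psp T) (u : Msp T n), IsSolDt ℓ F φ α m0 γ P u := by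
  classical
  obtain ⟨α0, hα0, H⟩ := hqual
  set h : (Msp T n × Psp T) → EReal :=
    fun p => Dobj F φ m0 (dpSolve ℓ α p.1 p.2, p.1, p.2) with hh
  -- every value of h is below valDt
  have hle : ∀ p : Msp T n × Psp T, h p ≤ valDt ℓ F φ α m0 :=
    fun p => dp_dobj_le_valDt (dpSolve_isDP hconv α p.1 p.2)
  -- near-optimal points exist
  have hsup : ∀ c : ℝ, (c : EReal) < valDt ℓ F φ α m0 →
      ∃ p : Msp T n × Psp T, (c : EReal) < h p := by
    intro c hc
    by_contra hcon
    push_neg at hcon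
    have hub : valDt ℓ F φ α m0 ≤ (c : EReal) := by
      apply iSup₂_le
      rintro ⟨u, γ, P⟩ hk
      have hu : u = dpSolve ℓ α γ P := isDP_unique hconv hk
      have : Dobj F φ m0 (u, γ, P) = h (γ, P) := by rw [hu]
      rw [this]
      exact hcon (γ, P)
    exact absurd (lt_of_lt_of_le hc hub) (lt_irrefl _)
  -- valDt is bounded above
  have hvaltop : ∃ B : ℝ, valDt ℓ F φ α m0 ≤ (B : EReal) := by
    obtain ⟨π0, hπ0, m10, hkol0, hpos0, hF0, hφ0⟩ := H (fun _ _ => 0) (fun _ _ => 0)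
      (fun _ => 0) (by rw [qnorm_zero]; exact le_of_lt hα0)
    refine ⟨(∑ t : Fin T, ∑ x, m10 t.castSucc x * (ℓ t x (π0 t x)).toReal) +
        (∑ s : Fin (T+1), (F s (fun x => m10 s x + 0)).toReal) +
        (∑ t : Fin T, (φ t (Qcpl α m10 π0 t + 0)).toReal), ?_⟩
    apply iSup₂_le
    rintro ⟨u, γ, P⟩ hk
    have wp := weak_duality hconv hk (fun _ _ => 0) (fun _ _ => 0) (fun _ => 0)
      π0 m10 hπ0 hkol0 hpos0 hF0 hφ0
    refine le_trans wp (EReal.coe_le_coe_iff.2 (le_of_eq ?_))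
    simp
  obtain ⟨B, hB⟩ := hvaltop
  -- valDt is bounded below (some finite value exists)
  have hγ0ex : ∀ s : Fin (T+1), ∃ y, conjFn (F s) y ≠ ⊤ :=
    fun s => exists_conjFn_ne_top _ (hconv.2.1 s).1 (hconv.2.1 s).2.1 (hconv.2.1 s).2.2
  have hP0ex : ∀ t : Fin T, ∃ y, conjR (φ t) y ≠ ⊤ :=
    fun t => exists_conjR_ne_top _ (hconv.2.2 t).1 (hconv.2.2 t).2.1 (hconv.2.2 t).2.2
  choose γ0 hγ0 using hγ0ex
  choose P0 hP0 using hP0ex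
  have hbotval : h (γ0, P0) ≠ ⊥ := by
    have hS1 : (∑ t, conjR (φ t) (P0 t)) =
        ((∑ t, (conjR (φ t) (P0 t)).toReal : ℝ) : EReal) := by
      rw [er_coe_sum]
      exact Finset.sum_congr rfl fun t _ =>
        (EReal.coe_toReal (hP0 t) (conjR_ne_bot (hconv.2.2 t).1.1 _)).symm
    have hS2 : (∑ s, conjFn (F s) (γ0 s)) =
        ((∑ s, (conjFn (F s) (γ0 s)).toReal : ℝ) : EReal) := by
      rw [er_coe_sum]
      exact Finset.sum_congr rfl fun s _ =>
        (EReal.coe_toReal (hγ0 s) (conjFn_ne_bot (hconv.2.1 s).1.1 _)).symm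
    show ((∑ x, m0 x * dpSolve ℓ α γ0 P0 0 x : ℝ) : EReal) -
        (∑ t, conjR (φ t) (P0 t)) - (∑ s, conjFn (F s) (γ0 s)) ≠ ⊥
    rw [hS1, hS2, ← EReal.coe_sub, ← EReal.coe_sub]
    exact EReal.coe_ne_bot _
  have hvalbot : (⊥ : EReal) < valDt ℓ F φ α m0 :=
    lt_of_lt_of_le (Ne.bot_lt hbotval) (hle (γ0, P0))
  have hvt_top : valDt ℓ F φ α m0 ≠ ⊤ :=
    ne_of_lt (lt_of_le_of_lt hB (EReal.coe_lt_top B))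
  set vt : ℝ := (valDt ℓ F φ α m0).toReal with hvtdef
  have hvt : valDt ℓ F φ α m0 = (vt : EReal) :=
    (EReal.coe_toReal hvt_top (ne_of_gt hvalbot)).symm
  set μ : ℝ := vt - 1 with hμdef
  -- coordinate bounds for γ
  have Hγb : ∀ (s : Fin (T+1)) (x : Fin n), ∃ R : ℝ,
      ∀ (u γ : Msp T n) (P : Psp T), IsDP ℓ α γ P u →
        ((μ : ℝ) : EReal) ≤ Dobj F φ m0 (u, γ, P) → |γ s x| ≤ R := by
    intro s x
    obtain ⟨πp, hπp, m1p, hkolp, hposp, hFp, hφp⟩ := H (fun _ _ => 0)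
      (fun s' x' => if s' = s then if x' = x then α0 else 0 else 0) (fun _ => 0)
      (by rw [qnorm_eps2, abs_of_pos hα0])
    obtain ⟨πm, hπm, m1m, hkolm, hposm, hFm, hφm⟩ := H (fun _ _ => 0)
      (fun s' x' => if s' = s then if x' = x then -α0 else 0 else 0) (fun _ => 0)
      (by rw [qnorm_eps2, abs_neg, abs_of_pos hα0])
    refine ⟨max (((∑ t : Fin T, ∑ x', m1p t.castSucc x' * (ℓ t x' (πp t x')).toReal) +
        (∑ s' : Fin (T+1), (F s' (fun x' => m1p s' x' +
          if s' = s then if x' = x then α0 else 0 else 0)).toReal) +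
        (∑ t : Fin T, (φ t (Qcpl α m1p πp t)).toReal) - μ) / α0)
      (((∑ t : Fin T, ∑ x', m1m t.castSucc x' * (ℓ t x' (πm t x')).toReal) +
        (∑ s' : Fin (T+1), (F s' (fun x' => m1m s' x' +
          if s' = s then if x' = x then -α0 else 0 else 0)).toReal) +
        (∑ t : Fin T, (φ t (Qcpl α m1m πm t)).toReal) - μ) / α0), ?_⟩
    intro u γ P hdp hμ2
    have wp := weak_duality hconv hdp (fun _ _ => 0)
      (fun s' x' => if s' = s then if x' = x then α0 else 0 else 0) (fun _ => 0)
      πp m1p hπp hkolp hposp hFp hφp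
    have wm := weak_duality hconv hdp (fun _ _ => 0)
      (fun s' x' => if s' = s then if x' = x then -α0 else 0 else 0) (fun _ => 0)
      πm m1m hπm hkolm hposm hFm hφm
    have hp2 := le_trans hμ2 wp
    have hm2 := le_trans hμ2 wm
    rw [EReal.coe_le_coe_iff, sum_single_mul s x α0 γ] at hp2
    rw [EReal.coe_le_coe_iff, sum_single_mul s x (-α0) γ] at hm2
    simp only [zero_mul, Finset.sum_const_zero, add_zero, sub_zero] at hp2 hm2
    apply abs_le.2
    constructor
    · have hm3 : -γ s x ≤ ((∑ t : Fin T, ∑ x', m1m t.castSucc x' * (ℓ t x' (πm t x')).toReal) +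
          (∑ s' : Fin (T+1), (F s' (fun x' => m1m s' x' +
            if s' = s then if x' = x then -α0 else 0 else 0)).toReal) +
          (∑ t : Fin T, (φ t (Qcpl α m1m πm t)).toReal) - μ) / α0 := by
        rw [le_div_iff₀ hα0]
        nlinarith [hm2]
      have := le_max_right (((∑ t : Fin T, ∑ x', m1p t.castSucc x' * (ℓ t x' (πp t x')).toReal) +
        (∑ s' : Fin (T+1), (F s' (fun x' => m1p s' x' +
          if s' = s then if x' = x then α0 else 0 else 0)).toReal) +
        (∑ t : Fin T, (φ t (Qcpl α m1p πp t)).toReal) - μ) / α0)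
        (((∑ t : Fin T, ∑ x', m1m t.castSucc x' * (ℓ t x' (πm t x')).toReal) +
        (∑ s' : Fin (T+1), (F s' (fun x' => m1m s' x' +
          if s' = s then if x' = x then -α0 else 0 else 0)).toReal) +
        (∑ t : Fin T, (φ t (Qcpl α m1m πm t)).toReal) - μ) / α0)
      linarith
    · have hp3 : γ s x ≤ ((∑ t : Fin T, ∑ x', m1p t.castSucc x' * (ℓ t x' (πp t x')).toReal) +
          (∑ s' : Fin (T+1), (F s' (fun x' => m1p s' x' +
            if s' = s then if x' = x then α0 else 0 else 0)).toReal) +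
          (∑ t : Fin T, (φ t (Qcpl α m1p πp t)).toReal) - μ) / α0 := by
        rw [le_div_iff₀ hα0]
        nlinarith [hp2]
      have := le_max_left (((∑ t : Fin T, ∑ x', m1p t.castSucc x' * (ℓ t x' (πp t x')).toReal) +
        (∑ s' : Fin (T+1), (F s' (fun x' => m1p s' x' +
          if s' = s then if x' = x then α0 else 0 else 0)).toReal) +
        (∑ t : Fin T, (φ t (Qcpl α m1p πp t)).toReal) - μ) / α0)
        (((∑ t : Fin T, ∑ x', m1m t.castSucc x' * (ℓ t x' (πm t x')).toReal) +
        (∑ s' : Fin (T+1), (F s' (fun x' => m1m s' x' +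
          if s' = s then if x' = x then -α0 else 0 else 0)).toReal) +
        (∑ t : Fin T, (φ t (Qcpl α m1m πm t)).toReal) - μ) / α0)
      linarith
  -- coordinate bounds for P
  have HPb : ∀ t0 : Fin T, ∃ R : ℝ,
      ∀ (u γ : Msp T n) (P : Psp T), IsDP ℓ α γ P u →
        ((μ : ℝ) : EReal) ≤ Dobj F φ m0 (u, γ, P) → |P t0| ≤ R := by
    intro t0
    obtain ⟨πp, hπp, m1p, hkolp, hposp, hFp, hφp⟩ := H (fun _ _ => 0) (fun _ _ => 0)
      (fun t => if t = t0 then α0 else 0)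
      (by rw [qnorm_eps3, abs_of_pos hα0])
    obtain ⟨πm, hπm, m1m, hkolm, hposm, hFm, hφm⟩ := H (fun _ _ => 0) (fun _ _ => 0)
      (fun t => if t = t0 then -α0 else 0)
      (by rw [qnorm_eps3, abs_neg, abs_of_pos hα0])
    refine ⟨max (((∑ t : Fin T, ∑ x', m1p t.castSucc x' * (ℓ t x' (πp t x')).toReal) +
        (∑ s' : Fin (T+1), (F s' (fun x' => m1p s' x')).toReal) +
        (∑ t : Fin T, (φ t (Qcpl α m1p πp t +
          if t = t0 then α0 else 0)).toReal) - μ) / α0)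
      (((∑ t : Fin T, ∑ x', m1m t.castSucc x' * (ℓ t x' (πm t x')).toReal) +
        (∑ s' : Fin (T+1), (F s' (fun x' => m1m s' x')).toReal) +
        (∑ t : Fin T, (φ t (Qcpl α m1m πm t +
          if t = t0 then -α0 else 0)).toReal) - μ) / α0), ?_⟩
    intro u γ P hdp hμ2
    have wp := weak_duality hconv hdp (fun _ _ => 0) (fun _ _ => 0)
      (fun t => if t = t0 then α0 else 0) πp m1p hπp hkolp hposp hFp hφp
    have wm := weak_duality hconv hdp (fun _ _ => 0) (fun _ _ => 0)
      (fun t => if t = t0 then -α0 else 0) πm m1m hπm hkolm hposm hFm hφm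
    have hp2 := le_trans hμ2 wp
    have hm2 := le_trans hμ2 wm
    rw [EReal.coe_le_coe_iff, sum_single_mul_t t0 α0 P] at hp2
    rw [EReal.coe_le_coe_iff, sum_single_mul_t t0 (-α0) P] at hm2
    simp only [zero_mul, Finset.sum_const_zero, add_zero, sub_zero] at hp2 hm2
    apply abs_le.2
    constructor
    · have hm3 : -P t0 ≤ ((∑ t : Fin T, ∑ x', m1m t.castSucc x' * (ℓ t x' (πm t x')).toReal) +
          (∑ s' : Fin (T+1), (F s' (fun x' => m1m s' x')).toReal) +
          (∑ t : Fin T, (φ t (Qcpl α m1m πm t +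
            if t = t0 then -α0 else 0)).toReal) - μ) / α0 := by
        rw [le_div_iff₀ hα0]
        nlinarith [hm2]
      have := le_max_right (((∑ t : Fin T, ∑ x', m1p t.castSucc x' * (ℓ t x' (πp t x')).toReal) +
        (∑ s' : Fin (T+1), (F s' (fun x' => m1p s' x')).toReal) +
        (∑ t : Fin T, (φ t (Qcpl α m1p πp t +
          if t = t0 then α0 else 0)).toReal) - μ) / α0)
        (((∑ t : Fin T, ∑ x', m1m t.castSucc x' * (ℓ t x' (πm t x')).toReal) +
        (∑ s' : Fin (T+1), (F s' (fun x' => m1m s' x')).toReal) +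
        (∑ t : Fin T, (φ t (Qcpl α m1m πm t +
          if t = t0 then -α0 else 0)).toReal) - μ) / α0)
      linarith
    · have hp3 : P t0 ≤ ((∑ t : Fin T, ∑ x', m1p t.castSucc x' * (ℓ t x' (πp t x')).toReal) +
          (∑ s' : Fin (T+1), (F s' (fun x' => m1p s' x')).toReal) +
          (∑ t : Fin T, (φ t (Qcpl α m1p πp t +
            if t = t0 then α0 else 0)).toReal) - μ) / α0 := by
        rw [le_div_iff₀ hα0]
        nlinarith [hp2]
      have := le_max_left (((∑ t : Fin T, ∑ x', m1p t.castSucc x' * (ℓ t x' (πp t x')).toReal) +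
        (∑ s' : Fin (T+1), (F s' (fun x' => m1p s' x')).toReal) +
        (∑ t : Fin T, (φ t (Qcpl α m1p πp t +
          if t = t0 then α0 else 0)).toReal) - μ) / α0)
        (((∑ t : Fin T, ∑ x', m1m t.castSucc x' * (ℓ t x' (πm t x')).toReal) +
        (∑ s' : Fin (T+1), (F s' (fun x' => m1m s' x')).toReal) +
        (∑ t : Fin T, (φ t (Qcpl α m1m πm t +
          if t = t0 then -α0 else 0)).toReal) - μ) / α0)
      linarith
  choose Rγ hRγ using Hγb
  choose RP hRP using HPb
  -- the compact box
  set Kset : Set (Msp T n × Psp T) :=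
    {p | (∀ s x, |p.1 s x| ≤ Rγ s x) ∧ ∀ t, |p.2 t| ≤ RP t} with hKsetdef
  have hKcpt : IsCompact Kset := by
    have hKeq : Kset = (Set.univ.pi fun s => Set.univ.pi fun x =>
        Set.Icc (-(Rγ s x)) (Rγ s x)) ×ˢ
        (Set.univ.pi fun t => Set.Icc (-(RP t)) (RP t)) := by
      ext p
      simp only [hKsetdef, Set.mem_setOf_eq, Set.mem_prod, Set.mem_pi, Set.mem_univ,
        true_implies, Set.mem_Icc, abs_le]
    rw [hKeq]
    exact IsCompact.prod
      (isCompact_univ_pi fun s => isCompact_univ_pi fun x => isCompact_Icc)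
      (isCompact_univ_pi fun t => isCompact_Icc)
  -- superlevel sets of h are closed
  have hLevClosed : ∀ c : ℝ, IsClosed {p : Msp T n × Psp T | (c : EReal) ≤ h p} := by
    intro c
    set h0 : (Msp T n × Psp T) → ℝ := fun p => ∑ x, m0 x * dpSolve ℓ α p.1 p.2 0 x with hh0
    set N : (Msp T n × Psp T) → EReal :=
      fun p => (∑ t, conjR (φ t) (p.2 t)) + ∑ s, conjFn (F s) (p.1 s) with hN
    have hS1b : ∀ p : Msp T n × Psp T, (∑ t, conjR (φ t) (p.2 t)) ≠ ⊥ :=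
      fun p => er_sum_ne_bot _ _ fun t _ => conjR_ne_bot (hconv.2.2 t).1.1 _
    have hS2b : ∀ p : Msp T n × Psp T, (∑ s, conjFn (F s) (p.1 s)) ≠ ⊥ :=
      fun p => er_sum_ne_bot _ _ fun s _ => conjFn_ne_bot (hconv.2.1 s).1.1 _
    have hhN : ∀ p, h p = ((h0 p : ℝ) : EReal) - N p := by
      intro p
      show ((∑ x, m0 x * dpSolve ℓ α p.1 p.2 0 x : ℝ) : EReal) -
          (∑ t, conjR (φ t) (p.2 t)) - (∑ s, conjFn (F s) (p.1 s)) = _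
      exact er_sub_sub _ (hS1b p) (hS2b p)
    have hseteq : {p : Msp T n × Psp T | (c : EReal) ≤ h p} =
        {p : Msp T n × Psp T | (c : EReal) ≤ ((h0 p : ℝ) : EReal) - N p} := by
      ext p
      rw [Set.mem_setOf_eq, Set.mem_setOf_eq, hhN p]
    rw [hseteq]
    apply superlevel_closed
    · apply continuous_finset_sum
      intro x _
      exact continuous_const.mul ((continuous_apply x).comp (dpSolve_zero_continuous hconv α))
    · apply lsc_add_ne_bot
      · apply lsc_finset_sum
        · intro t _
          exact LowerSemicontinuous.comp (f := conjR (φ t)) (conjR_lsc (φ t)) ((continuous_apply t).comp continuous_snd)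
        · intro t _ p
          exact conjR_ne_bot (hconv.2.2 t).1.1 _
      · apply lsc_finset_sum
        · intro s _
          exact LowerSemicontinuous.comp (f := conjFn (F s)) (conjFn_lsc (F s)) ((continuous_apply s).comp continuous_fst)
        · intro s _ p
          exact conjFn_ne_bot (hconv.2.1 s).1.1 _
      · exact hS1b
      · exact hS2b
    · intro p
      intro hcon
      rcases EReal.add_eq_bot_iff.1 hcon with hcc | hcc
      · exact hS1b p hcc
      · exact hS2b p hcc
  -- membership of near-optimal points in the box
  have hKmem : ∀ p : Msp T n × Psp T, ((μ : ℝ) : EReal) ≤ h p → p ∈ Kset := by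
    intro p hp
    constructor
    · intro s x
      exact hRγ s x (dpSolve ℓ α p.1 p.2) p.1 p.2 (dpSolve_isDP hconv α p.1 p.2) hp
    · intro t
      exact hRP t (dpSolve ℓ α p.1 p.2) p.1 p.2 (dpSolve_isDP hconv α p.1 p.2) hp
  -- the nested compact sets
  set K : ℕ → Set (Msp T n × Psp T) :=
    fun j => Kset ∩ {p | ((vt - 1/(j+1) : ℝ) : EReal) ≤ h p} with hK
  have hKne : ∀ j : ℕ, (K j).Nonempty := by
    intro j
    have hlt : ((vt - 1/(j+1) : ℝ) : EReal) < valDt ℓ F φ α m0 := by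
      rw [hvt, EReal.coe_lt_coe_iff]
      have : (0:ℝ) < 1/(j+1) := by positivity
      linarith
    obtain ⟨p, hp⟩ := hsup _ hlt
    have hμp : ((μ : ℝ) : EReal) ≤ h p := by
      refine le_trans ?_ (le_of_lt hp)
      rw [EReal.coe_le_coe_iff, hμdef]
      have h1 : 1/((j:ℝ)+1) ≤ 1 := by
        rw [div_le_one (by positivity)]
        linarith [Nat.cast_nonneg (α := ℝ) j]
      linarith
    exact ⟨p, hKmem p hμp, le_of_lt hp⟩
  have hKsub : ∀ j : ℕ, K (j+1) ⊆ K j := by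
    intro j p hp
    refine ⟨hp.1, ?_⟩
    have hp2 : ((vt - 1/(((j+1 : ℕ) : ℝ)+1) : ℝ) : EReal) ≤ h p := hp.2
    refine le_trans ?_ hp2
    rw [EReal.coe_le_coe_iff]
    have h1 : 1/((j:ℝ)+1+1) ≤ 1/((j:ℝ)+1) := by
      apply one_div_le_one_div_of_le (by positivity)
      linarith
    have h2 : ((j:ℝ)+1)+1 = (((j+1 : ℕ)):ℝ)+1 := by push_cast; ring
    rw [← h2]
    linarith
  have hKclosed : ∀ j : ℕ, IsClosed (K j) :=
    fun j => hKcpt.isClosed.inter (hLevClosed _)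
  have hK0 : IsCompact (K 0) := hKcpt.inter_right (hLevClosed _)
  obtain ⟨pstar, hpstar⟩ :=
    IsCompact.nonempty_iInter_of_sequence_nonempty_isCompact_isClosed K hKsub hKne hK0 hKclosed
  -- pstar attains valDt
  have hattain : valDt ℓ F φ α m0 ≤ h pstar := by
    rw [hvt]
    by_contra hcon
    push_neg at hcon
    obtain ⟨y, hy1, hy2⟩ := EReal.exists_between_coe_real hcon
    have hypos : (0:ℝ) < vt - y := by
      rw [EReal.coe_lt_coe_iff] at hy2
      linarith
    obtain ⟨j, hj⟩ := exists_nat_gt (1/(vt - y))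
    have hj2 : 1/((j:ℝ)+1) < vt - y := by
      rw [div_lt_iff₀ (by positivity)]
      rw [div_lt_iff₀ hypos] at hj
      nlinarith [Nat.cast_nonneg (α := ℝ) j]
    have hmem := (Set.mem_iInter.1 hpstar j).2
    have : ((vt - 1/(j+1) : ℝ) : EReal) ≤ h pstar := hmem
    have h3 : ((y : ℝ) : EReal) < ((vt - 1/(j+1) : ℝ) : EReal) := by
      rw [EReal.coe_lt_coe_iff]
      linarith
    exact absurd (lt_of_lt_of_le h3 this) (not_lt.2 (le_of_lt hy1))
  -- assemble the solution
  refine ⟨pstar.1, pstar.2, dpSolve ℓ α pstar.1 pstar.2,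
    dpSolve_isDP hconv α pstar.1 pstar.2, ?_⟩
  intro γ' P' u' hdp'
  calc Dobj F φ m0 (u', γ', P') ≤ valDt ℓ F φ α m0 := dp_dobj_le_valDt hdp'
    _ ≤ h pstar := hattain
    _ = Dobj F φ m0 (dpSolve ℓ α pstar.1 pstar.2, pstar.1, pstar.2) := rfl


/-- Lemma 4: `val(D) = val(D̃)`; any solution `(u,γ,P)` of (D)
yields a solution `(γ,P)` of (D̃); (D̃) has at least one solution; and any
solution `(γ,P)` of (D̃) yields a solution `(U[γ,P],γ,P)` of (D). -/
theorem dual_problems_equivalence {T n : ℕ} (hT : 1 ≤ T) (hn : 1 ≤ n)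
    (ℓ : LSp T n) (F : FSp T n) (φ : PhiSp T) (α : ASp T n)
    (m0 : Fin n → ℝ) (hm0 : m0 ∈ simplex n)
    (hconv : ConvAssumption ℓ F φ) (hqual : Qualif ℓ F φ α m0) :
    valD ℓ F φ α m0 = valDt ℓ F φ α m0 ∧
    (∀ (u γ : Msp T n) (P : Psp T), IsSolD ℓ F φ α m0 (u, γ, P) →
      ∀ uh : Msp T n, IsDP ℓ α γ P uh → IsSolDt ℓ F φ α m0 γ P uh) ∧
    (∃ (γ : Msp T n) (P : Psp T) (u : Msp T n), IsSolDt ℓ F φ α m0 γ P u) ∧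
    (∀ (γ : Msp T n) (P : Psp T) (u : Msp T n), IsSolDt ℓ F φ α m0 γ P u →
      IsSolD ℓ F φ α m0 (u, γ, P)) := by
  refine ⟨valD_eq_valDt hconv hm0, ?_, ?_, ?_⟩
  · rintro u γ P ⟨hfeas, hopt⟩ uh hdpuh
    refine ⟨hdpuh, ?_⟩
    intro γ' P' u' hdp'
    have h1 : Dobj F φ m0 (u', γ', P') ≤ Dobj F φ m0 (u, γ, P) :=
      hopt (u', γ', P') (isDP_feasD hdp')
    have h2 : Dobj F φ m0 (u, γ, P) ≤ Dobj F φ m0 (uh, γ, P) := by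
      have huh : uh = dpSolve ℓ α γ P := isDP_unique hconv hdpuh
      rw [huh]
      exact feasD_dobj_le hconv hm0 hfeas
    exact le_trans h1 h2
  · exact exists_solDt hm0 hconv hqual
  · rintro γ P u ⟨hdp, hopt⟩
    refine ⟨isDP_feasD hdp, ?_⟩
    rintro ⟨u', γ', P'⟩ hfeas'
    calc Dobj F φ m0 (u', γ', P') ≤ Dobj F φ m0 (dpSolve ℓ α γ' P', γ', P') :=
          feasD_dobj_le hconv hm0 hfeas'
      _ ≤ Dobj F φ m0 (u, γ, P) := hopt γ' P' _ (dpSolve_isDP hconv α γ' P')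

end
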